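/- arXiv:1401.7183 — 4 statements merged into one kernel-verified Lean document; each statement's English description precedes it below -/
import Mathlib

section
/- Let S be a finite nonempty set of positive integers and let s = max S. Then there exists a periodic independent set A in the distance graph G(S), with period at most s·2^s, such that δ(A) = ᾱ(S). -/
open Filter

/-- The upper density of a set of integers. -/
noncomputable def density (A : Set ℤ) : ℝ :=
  Filter.limsup
    (fun N : ℕ => ((A ∩ Set.Icc (-(N : ℤ)) (N : ℤ)).ncard : ℝ) / (2 * (N : ℝ) + 1))
    Filter.atTop

/-- A set of integers is independent in the distance graph `G(S)` if no two distinct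
elements differ by an element of `S`. -/
def IsIndepSet (S : Finset ℕ) (A : Set ℤ) : Prop :=
  ∀ a ∈ A, ∀ b ∈ A, a ≠ b → (a - b).natAbs ∉ S

/-- The independence ratio of the distance graph `G(S)`. -/
noncomputable def indRatio (S : Finset ℕ) : ℝ :=
  sSup (density '' {A : Set ℤ | IsIndepSet S A})

/-! ### Auxiliary definitions -/

/-- The `c`-periodization of a finite pattern `B ⊆ [0, c)`. -/
def perSet (c : ℕ) (B : Finset ℕ) : Set ℤ := {z : ℤ | (z % (c : ℤ)).toNat ∈ B}

open Classical in
/-- All patterns in `[0, c)` whose `c`-periodization is independent. -/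
noncomputable def gset (S : Finset ℕ) (c : ℕ) : Finset (Finset ℕ) :=
  (Finset.range c).powerset.filter (fun B => IsIndepSet S (perSet c B))

/-- Maximal size of a pattern in `[0, c)` with independent `c`-periodization. -/
noncomputable def gmax (S : Finset ℕ) (c : ℕ) : ℕ := (gset S c).sup Finset.card

/-- Maximal density of a periodic independent set of period at most `2 ^ s`. -/
noncomputable def mu (S : Finset ℕ) (s : ℕ) : ℝ :=
  (Finset.Icc 1 (2 ^ s)).sup' ⟨1, by simp [Nat.one_le_two_pow]⟩
    (fun c => (gmax S c : ℝ) / c)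

lemma perSet_empty (c : ℕ) : perSet c ∅ = ∅ := by
  ext z; simp [perSet]

lemma empty_indep (S : Finset ℕ) : IsIndepSet S (∅ : Set ℤ) := by
  intro a ha; exact ha.elim

lemma empty_mem_gset (S : Finset ℕ) (c : ℕ) : ∅ ∈ gset S c := by
  classical
  simp [gset, perSet_empty, empty_indep]

lemma exists_gmax (S : Finset ℕ) (c : ℕ) :
    ∃ B ∈ gset S c, B.card = gmax S c := by
  classical
  obtain ⟨B, hB, h⟩ := Finset.exists_mem_eq_sup (gset S c) ⟨∅, empty_mem_gset S c⟩ Finset.card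
  exact ⟨B, hB, h.symm⟩

lemma card_le_gmax (S : Finset ℕ) (c : ℕ) {B : Finset ℕ} (h : B ∈ gset S c) :
    B.card ≤ gmax S c := Finset.le_sup h

lemma gmax_div_le_mu (S : Finset ℕ) (s : ℕ) {c : ℕ} (hc : c ∈ Finset.Icc 1 (2 ^ s)) :
    (gmax S c : ℝ) / c ≤ mu S s := Finset.le_sup' (fun c => (gmax S c : ℝ) / c) hc

lemma mu_nonneg (S : Finset ℕ) (s : ℕ) : 0 ≤ mu S s := by
  have h := gmax_div_le_mu S s (c := 1) (by simp [Nat.one_le_two_pow])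
  refine le_trans ?_ h
  positivity

lemma ncard_Ico_int (a b : ℤ) : (Set.Ico a b).ncard = (b - a).toNat := by
  rw [← Finset.coe_Ico, Set.ncard_coe_finset, Int.card_Ico]

lemma ncard_split (A : Set ℤ) (u v w : ℤ) (h1 : u ≤ v) (h2 : v ≤ w) :
    (A ∩ Set.Ico u w).ncard = (A ∩ Set.Ico u v).ncard + (A ∩ Set.Ico v w).ncard := by
  rw [← Set.ncard_union_eq
      (by rw [Set.disjoint_left]; rintro z ⟨-, -, h2'⟩ ⟨-, h3', -⟩; omega)
      ((Set.finite_Ico _ _).inter_of_right _) ((Set.finite_Ico _ _).inter_of_right _),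
    ← Set.inter_union_distrib_left, Set.Ico_union_Ico_eq_Ico h1 h2]

/-! ### Counting for periodic sets -/

lemma window_const (A : Set ℤ) (c : ℕ) (hc : 0 < c)
    (hP : ∀ z : ℤ, z + (c : ℤ) ∈ A ↔ z ∈ A) (t : ℤ) :
    (A ∩ Set.Ico t (t + c)).ncard = (A ∩ Set.Ico 0 (c : ℤ)).ncard := by
  set F : ℤ → ℕ := fun u => (A ∩ Set.Ico u (u + c)).ncard with hF
  have key : ∀ u : ℤ, F (u + 1) = F u := by
    intro u
    have h1 : A ∩ Set.Ico u (u + c) = (A ∩ Set.Ico (u+1) (u + c)) ∪ (A ∩ {u}) := by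
      ext z
      by_cases hz : z ∈ A <;>
        simp only [Set.mem_inter_iff, Set.mem_Ico, Set.mem_union, Set.mem_singleton_iff, hz,
          true_and, false_and, or_self, iff_self, false_or]
      · omega
    have h2 : A ∩ Set.Ico (u+1) (u+1+c) = (A ∩ Set.Ico (u+1) (u + c)) ∪ (A ∩ {u + c}) := by
      ext z
      by_cases hz : z ∈ A <;>
        simp only [Set.mem_inter_iff, Set.mem_Ico, Set.mem_union, Set.mem_singleton_iff, hz,
          true_and, false_and, or_self, iff_self, false_or]
      · omega
    have fin1 : (A ∩ Set.Ico (u+1) (u+c)).Finite := (Set.finite_Ico _ _).inter_of_right _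
    have fin2 : (A ∩ ({u} : Set ℤ)).Finite := (Set.finite_singleton u).inter_of_right _
    have fin3 : (A ∩ ({u + c} : Set ℤ)).Finite := (Set.finite_singleton _).inter_of_right _
    have d1 : Disjoint (A ∩ Set.Ico (u+1) (u+c)) (A ∩ ({u} : Set ℤ)) := by
      rw [Set.disjoint_left]
      rintro z ⟨-, hz, -⟩ ⟨-, rfl⟩
      omega
    have d2 : Disjoint (A ∩ Set.Ico (u+1) (u+c)) (A ∩ ({u + c} : Set ℤ)) := by
      rw [Set.disjoint_left]
      rintro z ⟨-, -, hz⟩ ⟨-, rfl⟩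
      omega
    have hsing : (A ∩ ({u} : Set ℤ)).ncard = (A ∩ ({u + c} : Set ℤ)).ncard := by
      by_cases hu : u ∈ A
      · have hu' : u + c ∈ A := (hP u).mpr hu
        rw [Set.inter_eq_right.mpr (by simpa using hu),
          Set.inter_eq_right.mpr (by simpa using hu'), Set.ncard_singleton,
          Set.ncard_singleton]
      · have hu' : u + c ∉ A := fun h => hu ((hP u).mp h)
        rw [Set.inter_singleton_eq_empty.mpr hu, Set.inter_singleton_eq_empty.mpr hu']
    show (A ∩ Set.Ico (u+1) (u+1+c)).ncard = (A ∩ Set.Ico u (u+c)).ncard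
    rw [h1, h2, Set.ncard_union_eq d2 fin1 fin3, Set.ncard_union_eq d1 fin1 fin2, hsing]
  have main : ∀ u : ℤ, F u = F 0 := by
    intro u
    induction u using Int.induction_on with
    | zero => rfl
    | succ i ih => rw [key i, ih]
    | pred i ih =>
      rw [← ih, ← key (-(i:ℤ) - 1)]
      norm_num
  have := main t
  simpa [hF] using this

lemma blocks_count (A : Set ℤ) (c : ℕ) (hc : 0 < c)
    (hP : ∀ z : ℤ, z + (c : ℤ) ∈ A ↔ z ∈ A) (t : ℤ) (k : ℕ) :
    (A ∩ Set.Ico t (t + (k * c : ℕ))).ncard = k * (A ∩ Set.Ico 0 (c : ℤ)).ncard := by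
  induction k with
  | zero => simp
  | succ k ih =>
    have hsplit : A ∩ Set.Ico t (t + ((k+1) * c : ℕ)) =
        (A ∩ Set.Ico t (t + (k * c : ℕ))) ∪
          (A ∩ Set.Ico (t + (k * c : ℕ)) (t + (k * c : ℕ) + c)) := by
      have hkc : (k+1) * c = k * c + c := by ring
      ext z
      by_cases hz : z ∈ A <;>
        simp only [Set.mem_inter_iff, Set.mem_Ico, Set.mem_union, hz, true_and, false_and,
          or_self, iff_self, false_or] <;> omega
    have fin1 : (A ∩ Set.Ico t (t + (k * c : ℕ))).Finite := (Set.finite_Ico _ _).inter_of_right _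
    have fin2 : (A ∩ Set.Ico (t + (k * c : ℕ)) (t + (k * c : ℕ) + c)).Finite :=
      (Set.finite_Ico _ _).inter_of_right _
    have hd : Disjoint (A ∩ Set.Ico t (t + (k * c : ℕ)))
        (A ∩ Set.Ico (t + (k * c : ℕ)) (t + (k * c : ℕ) + c)) := by
      rw [Set.disjoint_left]
      rintro z ⟨-, -, hz⟩ ⟨-, hz', -⟩
      omega
    rw [hsplit, Set.ncard_union_eq hd fin1 fin2, ih, window_const A c hc hP, Nat.succ_mul]

lemma count_bounds (A : Set ℤ) (c : ℕ) (hc : 0 < c)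
    (hP : ∀ z : ℤ, z + (c : ℤ) ∈ A ↔ z ∈ A) (N : ℕ) :
    ((2*N+1)/c) * (A ∩ Set.Ico 0 (c : ℤ)).ncard ≤ (A ∩ Set.Icc (-(N:ℤ)) N).ncard ∧
    (A ∩ Set.Icc (-(N:ℤ)) N).ncard ≤ ((2*N+1)/c + 1) * (A ∩ Set.Ico 0 (c : ℤ)).ncard := by
  set m := (A ∩ Set.Ico 0 (c : ℤ)).ncard
  set q := (2*N+1)/c with hq
  have hq1 : q * c ≤ 2*N+1 := Nat.div_mul_le_self _ _
  have hqc : (q+1) * c = q * c + c := by ring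
  have hcq : c * q = q * c := by ring
  have hq2 : 2*N+1 < (q+1) * c := by
    have h1 := Nat.mod_lt (2*N+1) hc
    have h2 := Nat.div_add_mod (2*N+1) c
    rw [← hq] at h2
    omega
  have hfinIcc : (A ∩ Set.Icc (-(N:ℤ)) N).Finite := (Set.finite_Icc _ _).inter_of_right _
  constructor
  · have hsub : A ∩ Set.Ico (-(N:ℤ)) (-(N:ℤ) + (q*c : ℕ)) ⊆ A ∩ Set.Icc (-(N:ℤ)) N := by
      rintro z ⟨hz, h1, h2⟩
      exact ⟨hz, h1, by omega⟩
    calc q * m = (A ∩ Set.Ico (-(N:ℤ)) (-(N:ℤ) + (q*c : ℕ))).ncard :=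
          (blocks_count A c hc hP _ q).symm
      _ ≤ _ := Set.ncard_le_ncard hsub hfinIcc
  · have hsub : A ∩ Set.Icc (-(N:ℤ)) N ⊆ A ∩ Set.Ico (-(N:ℤ)) (-(N:ℤ) + ((q+1)*c : ℕ)) := by
      rintro z ⟨hz, h1, h2⟩
      exact ⟨hz, h1, by omega⟩
    calc (A ∩ Set.Icc (-(N:ℤ)) N).ncard
        ≤ (A ∩ Set.Ico (-(N:ℤ)) (-(N:ℤ) + ((q+1)*c : ℕ))).ncard :=
          Set.ncard_le_ncard hsub ((Set.finite_Ico _ _).inter_of_right _)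
      _ = (q+1) * m := blocks_count A c hc hP _ (q+1)

lemma tendsto_c_div (c : ℝ) :
    Filter.Tendsto (fun N : ℕ => c / (2 * (N : ℝ) + 1)) atTop (nhds 0) := by
  apply Filter.Tendsto.div_atTop tendsto_const_nhds
  apply Filter.tendsto_atTop_add_const_right
  exact (tendsto_natCast_atTop_atTop (R := ℝ)).const_mul_atTop two_pos

lemma density_periodic (A : Set ℤ) (c : ℕ) (hc : 0 < c)
    (hP : ∀ z : ℤ, z + (c : ℤ) ∈ A ↔ z ∈ A) :
    density A = ((A ∩ Set.Ico 0 (c : ℤ)).ncard : ℝ) / c := by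
  set m := (A ∩ Set.Ico 0 (c : ℤ)).ncard with hm
  have hmc : m ≤ c := by
    have h := Set.ncard_le_ncard (Set.inter_subset_right (s := A) (t := Set.Ico 0 (c:ℤ)))
      (Set.finite_Ico (0:ℤ) c)
    rw [ncard_Ico_int] at h
    omega
  have hcR : (0:ℝ) < c := by exact_mod_cast hc
  have key : Filter.Tendsto
      (fun N : ℕ => ((A ∩ Set.Icc (-(N : ℤ)) (N : ℤ)).ncard : ℝ) / (2 * (N : ℝ) + 1))
      Filter.atTop (nhds ((m:ℝ)/c)) := by
    have hbound : ∀ N : ℕ,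
        ((m:ℝ)/c - c/(2*(N:ℝ)+1) ≤ ((A ∩ Set.Icc (-(N : ℤ)) (N : ℤ)).ncard : ℝ) / (2*(N:ℝ)+1))
        ∧ (((A ∩ Set.Icc (-(N : ℤ)) (N : ℤ)).ncard : ℝ) / (2*(N:ℝ)+1) ≤ (m:ℝ)/c + c/(2*(N:ℝ)+1)) := by
      intro N
      obtain ⟨hlo, hhi⟩ := count_bounds A c hc hP N
      set K := (A ∩ Set.Icc (-(N:ℤ)) N).ncard with hK
      set q := (2*N+1)/c with hq
      have hq1 : q * c ≤ 2*N+1 := Nat.div_mul_le_self _ _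
      have hq2 : 2*N+1 < q * c + c := by
        have h1 := Nat.mod_lt (2*N+1) hc
        have h2 := Nat.div_add_mod (2*N+1) c
        rw [← hq] at h2
        have h3 : c * q = q * c := by ring
        omega
      have hL : (0:ℝ) < 2*(N:ℝ)+1 := by positivity
      have hq1' : (q:ℝ) * c ≤ 2*(N:ℝ)+1 := by exact_mod_cast hq1
      have hq2' : 2*(N:ℝ)+1 ≤ (q:ℝ)*c + c := by
        have : ((2*N+1 : ℕ) : ℝ) ≤ ((q*c + c : ℕ) : ℝ) := by exact_mod_cast hq2.le
        push_cast at this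
        linarith
      have hlo' : (q:ℝ) * m ≤ K := by exact_mod_cast hlo
      have hhi' : (K:ℝ) ≤ ((q:ℝ)+1) * m := by exact_mod_cast hhi
      have hmc' : (m:ℝ) ≤ c := by exact_mod_cast hmc
      have hmR : (0:ℝ) ≤ m := by positivity
      have hqR : (0:ℝ) ≤ q := by positivity
      constructor
      · rw [sub_le_iff_le_add, ← add_div, div_le_div_iff₀ hcR hL]
        nlinarith [mul_le_mul_of_nonneg_left hq2' hmR, mul_le_mul_of_nonneg_right hlo' hcR.le,
          mul_le_mul_of_nonneg_right hmc' hcR.le]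
      · rw [div_add_div _ _ (ne_of_gt hcR) (ne_of_gt hL), div_le_div_iff₀ hL (mul_pos hcR hL)]
        nlinarith [mul_le_mul_of_nonneg_right hhi' hcR.le, mul_le_mul_of_nonneg_left hq1' hmR,
          mul_le_mul_of_nonneg_right hmc' hcR.le, hL.le]
    refine tendsto_of_tendsto_of_tendsto_of_le_of_le ?_ ?_
        (fun N => (hbound N).1) (fun N => (hbound N).2)
    · simpa using tendsto_const_nhds.sub (tendsto_c_div (c:ℝ))
    · simpa using tendsto_const_nhds.add (tendsto_c_div (c:ℝ))
  exact key.limsup_eq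

/-! ### The main counting bound -/

open Classical in
lemma count_le (S : Finset ℕ) (hS : S.Nonempty) (hSpos : ∀ n ∈ S, 0 < n)
    (N : ℕ) (A : Set ℤ) (hA : IsIndepSet S A) (a : ℤ) :
    ((A ∩ Set.Ico a (a + N)).ncard : ℝ)
      ≤ mu S (S.max' hS) * N + 2 ^ (S.max' hS) := by
  set s := S.max' hS with hs
  induction N using Nat.strong_induction_on generalizing A a with
  | _ N ih =>
  by_cases hN : N ≤ 2 ^ s
  · -- base case
    have h1 : (A ∩ Set.Ico a (a + N)).ncard ≤ N := by
      have h := Set.ncard_le_ncard (Set.inter_subset_right (s := A) (t := Set.Ico a (a + N)))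
        (Set.finite_Ico a (a + N))
      rw [ncard_Ico_int] at h
      omega
    have h2 : (0:ℝ) ≤ mu S s * N := mul_nonneg (mu_nonneg S s) (by positivity)
    have h3 : ((A ∩ Set.Ico a (a + N)).ncard : ℝ) ≤ N := by exact_mod_cast h1
    have h4 : (N : ℝ) ≤ 2 ^ s := by exact_mod_cast hN
    push_cast
    linarith
  · push_neg at hN
    -- the trace of A starting at a
    set x : ℕ → Prop := fun n => (a + (n : ℤ)) ∈ A with hx
    have hAx : ∀ m n : ℕ, m < n → x m → x n → (n - m) ∉ S := by
      intro m n hmn hm hn hmem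
      refine hA _ hm _ hn (by simp; omega) ?_
      have : ((a + (m:ℤ)) - (a + (n:ℤ))).natAbs = n - m := by omega
      rwa [this]
    -- pigeonhole on windows
    obtain ⟨t1, t2, ht1, ht2, hlt, heq⟩ :
        ∃ t1 t2 : ℕ, t1 ∈ Finset.range (2^s+1) ∧ t2 ∈ Finset.range (2^s+1) ∧ t1 < t2 ∧
          (fun i : Fin s => decide (x (t1 + i))) = (fun i : Fin s => decide (x (t2 + i))) := by
      obtain ⟨u, hu, v, hv, hne, hf⟩ :=
        Finset.exists_ne_map_eq_of_card_lt_of_maps_to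
          (s := Finset.range (2^s + 1)) (t := (Finset.univ : Finset (Fin s → Bool)))
          (by simp) (fun t _ => Finset.mem_univ _)
          (f := fun t => fun i : Fin s => decide (x (t + i)))
      rcases lt_or_gt_of_ne hne with h | h
      exacts [⟨u, v, hu, hv, h, hf⟩, ⟨v, u, hv, hu, h, hf.symm⟩]
    have hwin : ∀ i : ℕ, i < s → (x (t1 + i) ↔ x (t2 + i)) := by
      intro i hi
      have := congrFun heq ⟨i, hi⟩
      simpa [decide_eq_decide] using this
    simp only [Finset.mem_range] at ht1 ht2
    set c := t2 - t1 with hcdef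
    have ht2c : t2 = t1 + c := by omega
    have hc1 : 1 ≤ c := by omega
    have hc2 : c ≤ 2 ^ s := by omega
    have hcN : c ≤ N := by omega
    -- the pattern of A on [a+t1, a+t2)
    set B : Finset ℕ := (Finset.range c).filter (fun n => x (t1 + n)) with hB
    -- extension lemma
    have hext : ∀ j r : ℕ, r ∈ B → r + j * c < c + s → x (t1 + r + j * c) := by
      intro j
      induction j with
      | zero =>
        intro r hr _
        simpa using (Finset.mem_filter.mp hr).2
      | succ j ihj =>
        intro r hr hlt'
        have hjc : (j+1) * c = j * c + c := by ring
        have hprev := ihj r hr (by omega)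
        have hi : r + j * c < s := by omega
        have hw := hwin (r + j * c) hi
        have e1 : t1 + (r + j * c) = t1 + r + j * c := by omega
        have e2 : t2 + (r + j * c) = t1 + r + (j+1) * c := by omega
        rw [e1] at hw
        rw [e2] at hw
        exact hw.mp hprev
    -- the periodization of B is independent
    have hper : IsIndepSet S (perSet c B) := by
      have key : ∀ (w : ℤ) (d : ℕ), d ∈ S → w ∈ perSet c B → w + (d:ℤ) ∈ perSet c B → False := by
        intro w d hd hw hwd
        have hd1 : 0 < d := hSpos d hd
        have hds : d ≤ s := S.le_max' d hd
        have hcz : (c:ℤ) ≠ 0 := by positivity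
        have hcz' : (0:ℤ) < c := by positivity
        have hw1 : 0 ≤ w % (c:ℤ) := Int.emod_nonneg w hcz
        have hw2 : w % (c:ℤ) < c := Int.emod_lt_of_pos w hcz'
        set r1 := (w % (c:ℤ)).toNat with hr1
        have hr1c : r1 < c := by omega
        have hr1B : r1 ∈ B := hw
        have hmod : (w + (d:ℤ)) % (c:ℤ) = ((r1 + d : ℕ) : ℤ) % (c:ℤ) := by
          conv_lhs => rw [← Int.mul_ediv_add_emod w (c:ℤ)]
          rw [show (c:ℤ) * (w / c) + w % c + d = (w % c + d) + (w/c) * c by ring,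
            Int.add_mul_emod_self_right]
          congr 1
          omega
        have hr2B : (r1 + d) % c ∈ B := by
          have : ((w + (d:ℤ)) % (c:ℤ)).toNat = (r1 + d) % c := by
            rw [hmod, ← Int.natCast_mod]
            omega
          rwa [← this]
        set r2 := (r1 + d) % c with hr2
        set j := (r1 + d) / c with hj
        have hdm : j * c + r2 = r1 + d := by
          have h := Nat.div_add_mod (r1 + d) c
          have hcm : c * j = j * c := Nat.mul_comm c j
          rw [← hj, ← hr2, hcm] at h
          omega
        have hbound : r2 + j * c < c + s := by omega
        have hxtop := hext j r2 hr2B hbound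
        have hxbot : x (t1 + r1) := by
          simpa using (Finset.mem_filter.mp hr1B).2
        have e3 : t1 + r2 + j * c = (t1 + r1) + d := by omega
        rw [e3] at hxtop
        exact hAx (t1 + r1) (t1 + r1 + d) (by omega) hxbot hxtop (by simpa using hd)
      intro z1 hz1 z2 hz2 hne hdS
      rcases lt_trichotomy z1 z2 with h | h | h
      · exact key z1 ((z1 - z2).natAbs) hdS hz1
          (by rwa [show z1 + (((z1 - z2).natAbs : ℤ)) = z2 by omega])
      · exact hne h
      · exact key z2 ((z1 - z2).natAbs) hdS hz2
          (by rwa [show z2 + (((z1 - z2).natAbs : ℤ)) = z1 by omega])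
    -- B.card bounded via mu
    have hcRe : (0:ℝ) < c := by positivity
    have hmuc : (B.card : ℝ) ≤ mu S s * c := by
      have hBg : B ∈ gset S c := by
        rw [gset, Finset.mem_filter, Finset.mem_powerset]
        exact ⟨Finset.filter_subset _ _, hper⟩
      have h1 : (B.card : ℝ) ≤ (gmax S c : ℝ) := by exact_mod_cast card_le_gmax S c hBg
      have h2 := gmax_div_le_mu S s (c := c) (by rw [Finset.mem_Icc]; omega)
      rw [div_le_iff₀ hcRe] at h2
      linarith
    -- block count equals B.card
    have hblock : (A ∩ Set.Ico (a + (t1:ℤ)) (a + t1 + c)).ncard = B.card := by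
      have himg : A ∩ Set.Ico (a + (t1:ℤ)) (a + t1 + c) = (fun n : ℕ => a + (t1:ℤ) + n) '' ↑B := by
        ext z
        simp only [Set.mem_inter_iff, Set.mem_Ico, Set.mem_image, Finset.mem_coe, hB,
          Finset.mem_filter, Finset.mem_range, hx]
        constructor
        · rintro ⟨hz, h1, h2⟩
          refine ⟨(z - a - t1).toNat, ⟨by omega, ?_⟩, by omega⟩
          have : a + ((t1 + (z - a - t1).toNat : ℕ) : ℤ) = z := by omega
          rwa [this]
        · rintro ⟨n, ⟨hn, hxn⟩, rfl⟩
          have : a + ((t1 + n : ℕ) : ℤ) = a + (t1:ℤ) + n := by omega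
          rw [this] at hxn
          exact ⟨hxn, by omega, by omega⟩
      rw [himg, Set.ncard_image_of_injective _ (fun n1 n2 h => by omega),
        Set.ncard_coe_finset]
    -- the spliced set
    set A2 : Set ℤ := {z | (z < a + t1 ∧ z ∈ A) ∨ (a + (t1:ℤ) ≤ z ∧ z + c ∈ A)} with hA2
    have hA2indep : IsIndepSet S A2 := by
      have key2 : ∀ (w : ℤ) (d : ℕ), d ∈ S → w ∈ A2 → w + (d:ℤ) ∈ A2 → False := by
        intro w d hd hw hwd
        have hd1 : 0 < d := hSpos d hd
        have hds : d ≤ s := S.le_max' d hd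
        have hcontra : ∀ u v : ℤ, u ∈ A → v ∈ A → u < v → (v - u).natAbs = d → False := by
          intro u v hu hv huv habs
          exact hA u hu v hv (by omega)
            (by rw [show (u - v).natAbs = (v-u).natAbs by omega, habs]; exact hd)
        rcases hw with ⟨hw1, hw2⟩ | ⟨hw1, hw2⟩
        · rcases hwd with ⟨hd1', hd2'⟩ | ⟨hd1', hd2'⟩
          · exact hcontra w (w + d) hw2 hd2' (by omega) (by omega)
          · -- crossing case : w < a + t1 ≤ w + d
            have hi : (w + (d:ℤ) - a - t1).toNat < s := by omega
            have hwi := hwin _ hi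
            have e1 : a + ((t1 + (w + (d:ℤ) - a - t1).toNat : ℕ) : ℤ) = w + d := by omega
            have e2 : a + ((t2 + (w + (d:ℤ) - a - t1).toNat : ℕ) : ℤ) = w + d + c := by omega
            rw [hx] at hwi
            simp only [e1, e2] at hwi
            exact hcontra w (w + d) hw2 (hwi.mpr hd2') (by omega) (by omega)
        · rcases hwd with ⟨hd1', hd2'⟩ | ⟨hd1', hd2'⟩
          · omega
          · exact hcontra (w + c) (w + d + c) hw2 hd2' (by omega) (by omega)
      intro z1 hz1 z2 hz2 hne hdS
      rcases lt_trichotomy z1 z2 with h | h | h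
      · exact key2 z1 ((z1 - z2).natAbs) hdS hz1
          (by rwa [show z1 + (((z1 - z2).natAbs : ℤ)) = z2 by omega])
      · exact hne h
      · exact key2 z2 ((z1 - z2).natAbs) hdS hz2
          (by rwa [show z2 + (((z1 - z2).natAbs : ℤ)) = z1 by omega])
    -- counting the spliced set
    have hNc : ((N - c : ℕ) : ℤ) = (N:ℤ) - c := by omega
    have hA2count : (A2 ∩ Set.Ico a (a + ((N - c : ℕ) : ℤ))).ncard
        = (A ∩ Set.Ico a (a + (t1:ℤ))).ncard
          + (A ∩ Set.Ico (a + (t1:ℤ) + c) (a + (N:ℤ))).ncard := by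
      rw [ncard_split A2 a (a + (t1:ℤ)) (a + ((N - c : ℕ) : ℤ)) (by omega) (by omega)]
      congr 1
      · congr 1
        ext z
        simp only [Set.mem_inter_iff, Set.mem_Ico, hA2, Set.mem_setOf_eq]
        constructor
        · rintro ⟨(⟨-, hz⟩ | ⟨hz1', -⟩), h1, h2⟩
          · exact ⟨hz, h1, h2⟩
          · omega
        · rintro ⟨hz, h1, h2⟩
          exact ⟨Or.inl ⟨h2, hz⟩, h1, h2⟩
      · have himg : A2 ∩ Set.Ico (a + (t1:ℤ)) (a + ((N - c : ℕ) : ℤ))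
            = (fun z : ℤ => z - c) '' (A ∩ Set.Ico (a + (t1:ℤ) + c) (a + (N:ℤ))) := by
          ext z
          simp only [Set.mem_inter_iff, Set.mem_Ico, hA2, Set.mem_setOf_eq, Set.mem_image]
          constructor
          · rintro ⟨(⟨hz1', -⟩ | ⟨-, hz⟩), h1, h2⟩
            · omega
            · exact ⟨z + c, ⟨hz, by omega, by omega⟩, by omega⟩
          · rintro ⟨v, ⟨hv, h1, h2⟩, rfl⟩
            refine ⟨Or.inr ⟨by omega, by rwa [show v - (c:ℤ) + c = v by ring]⟩, by omega, by omega⟩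
        rw [himg, Set.ncard_image_of_injective _ (fun z1 z2 h => by omega)]
    -- split the original count
    have hsplit : (A ∩ Set.Ico a (a + (N:ℤ))).ncard
        = (A ∩ Set.Ico a (a + (t1:ℤ))).ncard
          + (A ∩ Set.Ico (a + (t1:ℤ)) (a + (t1:ℤ) + c)).ncard
          + (A ∩ Set.Ico (a + (t1:ℤ) + c) (a + (N:ℤ))).ncard := by
      rw [ncard_split A a (a + (t1:ℤ)) (a + (N:ℤ)) (by omega) (by omega),
        ncard_split A (a + (t1:ℤ)) (a + (t1:ℤ) + c) (a + (N:ℤ)) (by omega) (by omega)]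
      omega
    have hih := ih (N - c) (by omega) A2 hA2indep a
    have hcast : ((N - c : ℕ) : ℝ) = (N:ℝ) - c := by
      have h : ((N - c : ℕ) : ℝ) = ((N:ℕ) : ℝ) - (c:ℕ) := by
        rw [Nat.cast_sub hcN]
      simpa using h
    rw [hcast] at hih
    calc ((A ∩ Set.Ico a (a + (N:ℤ))).ncard : ℝ)
        = ((A ∩ Set.Ico a (a + (t1:ℤ))).ncard : ℝ) + (B.card : ℝ)
          + ((A ∩ Set.Ico (a + (t1:ℤ) + c) (a + (N:ℤ))).ncard : ℝ) := by
          rw [hsplit, hblock]; push_cast; ring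
      _ = ((A2 ∩ Set.Ico a (a + ((N - c : ℕ) : ℤ))).ncard : ℝ) + (B.card : ℝ) := by
          rw [hA2count]; push_cast; ring
      _ ≤ (mu S s * ((N:ℝ) - c) + 2 ^ s) + mu S s * c := add_le_add hih hmuc
      _ = mu S s * N + 2 ^ s := by ring

lemma density_le_mu (S : Finset ℕ) (hS : S.Nonempty) (hSpos : ∀ n ∈ S, 0 < n)
    (A : Set ℤ) (hA : IsIndepSet S A) :
    density A ≤ mu S (S.max' hS) := by
  set s := S.max' hS with hs
  have hb : ∀ N : ℕ, ((A ∩ Set.Icc (-(N:ℤ)) N).ncard : ℝ) / (2*(N:ℝ)+1)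
      ≤ mu S s + (2^s : ℝ)/(2*(N:ℝ)+1) := by
    intro N
    have h := count_le S hS hSpos (2*N+1) A hA (-(N:ℤ))
    have hset : A ∩ Set.Icc (-(N:ℤ)) N = A ∩ Set.Ico (-(N:ℤ)) ((-(N:ℤ)) + ((2*N+1 : ℕ):ℤ)) := by
      ext z
      by_cases hz : z ∈ A <;> simp only [Set.mem_inter_iff, Set.mem_Icc, Set.mem_Ico, hz,
        true_and, false_and, iff_self]
      omega
    have hL : (0:ℝ) < 2*(N:ℝ)+1 := by positivity
    have h2 : ((A ∩ Set.Icc (-(N:ℤ)) N).ncard : ℝ) ≤ mu S s * (2*(N:ℝ)+1) + 2^s := by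
      rw [hset]
      convert h using 2
      push_cast
      ring
    have h3 : (mu S s * (2*(N:ℝ)+1) + 2^s) / (2*(N:ℝ)+1)
        = mu S s + (2^s:ℝ)/(2*(N:ℝ)+1) := by
      field_simp
    calc ((A ∩ Set.Icc (-(N:ℤ)) N).ncard : ℝ) / (2*(N:ℝ)+1)
        ≤ (mu S s * (2*(N:ℝ)+1) + 2^s) / (2*(N:ℝ)+1) := by gcongr
      _ = _ := h3
  have hv : Filter.Tendsto (fun N : ℕ => mu S s + (2^s : ℝ)/(2*(N:ℝ)+1)) atTop
      (nhds (mu S s)) := by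
    simpa using tendsto_const_nhds.add (tendsto_c_div ((2:ℝ)^s))
  have hlim : Filter.limsup (fun N : ℕ => mu S s + (2^s:ℝ)/(2*(N:ℝ)+1)) atTop = mu S s :=
    hv.limsup_eq
  rw [density, ← hlim]
  have hcob : Filter.IsCoboundedUnder (· ≤ ·) atTop
      (fun N : ℕ => ((A ∩ Set.Icc (-(N:ℤ)) N).ncard : ℝ) / (2*(N:ℝ)+1)) :=
    Filter.isCoboundedUnder_le_of_le atTop (x := 0) (fun N => by positivity)
  exact Filter.limsup_le_limsup (Filter.Eventually.of_forall hb) hcob hv.isBoundedUnder_le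

/-- There is a periodic independent set, of period at most `s * 2 ^ s` where `s = max S`,
whose density achieves the independence ratio of `G(S)`. -/
theorem exists_periodic_extremal_indep_set
    (S : Finset ℕ) (hS : S.Nonempty) (hSpos : ∀ n ∈ S, 0 < n) :
    ∃ (A : Set ℤ) (p : ℕ),
      IsIndepSet S A ∧
      0 < p ∧ p ≤ S.max' hS * 2 ^ (S.max' hS) ∧
      (∀ z : ℤ, z + (p : ℤ) ∈ A ↔ z ∈ A) ∧
      density A = indRatio S := by
  classical
  set s := S.max' hS with hs
  have hs1 : 1 ≤ s := hSpos s (S.max'_mem hS)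
  -- the optimal period
  obtain ⟨c, hcIcc, hcmu⟩ := Finset.exists_mem_eq_sup' (f := fun c => (gmax S c : ℝ) / c)
    (s := Finset.Icc 1 (2 ^ s)) ⟨1, by simp [Nat.one_le_two_pow]⟩
  rw [Finset.mem_Icc] at hcIcc
  obtain ⟨hc1, hc2⟩ := hcIcc
  obtain ⟨B, hBg, hBcard⟩ := exists_gmax S c
  set A := perSet c B with hAdef
  have hcz : (0:ℤ) < c := by positivity
  have hP : ∀ z : ℤ, z + (c:ℤ) ∈ A ↔ z ∈ A := by
    intro z
    show ((z + c) % (c:ℤ)).toNat ∈ B ↔ (z % (c:ℤ)).toNat ∈ B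
    rw [show (z + (c:ℤ)) % (c:ℤ) = z % c from by
      conv_lhs => rw [show z + (c:ℤ) = z + 1 * c by ring, Int.add_mul_emod_self_right]]
  obtain ⟨hBsub, hBindep⟩ : B ⊆ Finset.range c ∧ IsIndepSet S A := by
    have := hBg
    rw [gset, Finset.mem_filter, Finset.mem_powerset] at this
    exact this
  -- density of A is gmax c / c
  have hcount : (A ∩ Set.Ico 0 (c:ℤ)).ncard = B.card := by
    have himg : A ∩ Set.Ico 0 (c:ℤ) = (fun n : ℕ => (n:ℤ)) '' ↑B := by
      ext z
      simp only [Set.mem_inter_iff, Set.mem_Ico, Set.mem_image, Finset.mem_coe]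
      constructor
      · rintro ⟨hz, h1, h2⟩
        refine ⟨z.toNat, ?_, by omega⟩
        have hzz : z % (c:ℤ) = z := Int.emod_eq_of_lt h1 h2
        have : (z % (c:ℤ)).toNat = z.toNat := by rw [hzz]
        rwa [← this]
      · rintro ⟨n, hn, rfl⟩
        have hnc : n < c := Finset.mem_range.mp (hBsub hn)
        have h1 : ((n:ℤ) % (c:ℤ)).toNat = n := by
          rw [Int.emod_eq_of_lt (by positivity) (by exact_mod_cast hnc)]
          omega
        exact ⟨by show ((n:ℤ) % (c:ℤ)).toNat ∈ B; rw [h1]; exact hn, by positivity,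
          by exact_mod_cast hnc⟩
    rw [himg, Set.ncard_image_of_injective _ (fun n1 n2 h => by omega), Set.ncard_coe_finset]
  have hdA : density A = mu S s := by
    rw [density_periodic A c (by omega) hP, hcount, hBcard, mu, ← hcmu]
  -- mu is the sup
  have hgreat : IsGreatest (density '' {A : Set ℤ | IsIndepSet S A}) (mu S s) := by
    constructor
    · exact ⟨A, hBindep, hdA⟩
    · rintro x ⟨A', hA', rfl⟩
      exact density_le_mu S hS hSpos A' hA'
  refine ⟨A, c, hBindep, by omega, ?_, hP, ?_⟩
  · calc c ≤ 2 ^ s := hc2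
      _ = 1 * 2 ^ s := (one_mul _).symm
      _ ≤ s * 2 ^ s := Nat.mul_le_mul_right _ hs1
  · rw [hdA, indRatio, hgreat.csSup_eq.symm]
end

section
/- Let S be a finite nonempty set of positive integers, set s = max S, and let k be a positive integer such that the distance graph G(S) admits a proper k-coloring (in particular this holds when k is the chromatic number of G(S)). Then there exists a periodic proper k-coloring of G(S) with period at most s·k^s. -/
/-- If the distance graph `G(S)` admits a proper `k`-coloring, then it admits a periodic
proper `k`-coloring with period at most `s * k ^ s` where `s = max S`. -/
theorem exists_periodic_proper_coloring
    (S : Finset ℕ) (hS : S.Nonempty) (hSpos : ∀ n ∈ S, 0 < n)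
    (k : ℕ) (hk : 0 < k)
    (c : ℤ → Fin k) (hc : ∀ i j : ℤ, (i - j).natAbs ∈ S → c i ≠ c j) :
    ∃ (c' : ℤ → Fin k) (p : ℕ),
      (∀ i j : ℤ, (i - j).natAbs ∈ S → c' i ≠ c' j) ∧
      0 < p ∧ p ≤ S.max' hS * k ^ (S.max' hS) ∧
      ∀ i : ℤ, c' (i + (p : ℤ)) = c' i := by
  set s := S.max' hS with hs_def
  have hs : 0 < s := hSpos _ (S.max'_mem hS)
  have hds : ∀ d ∈ S, d ≤ s := fun d hd => S.le_max' d hd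
  -- pigeonhole: two windows of length s starting at multiples of s coincide
  obtain ⟨a, b, hab, hfab⟩ :=
    Fintype.exists_ne_map_eq_of_card_lt
      (fun n : Fin (k ^ s + 1) => (fun t : Fin s => c (((n : ℕ) * s + (t : ℕ) : ℕ) : ℤ)))
      (by simp)
  have habv : (a : ℕ) ≠ (b : ℕ) := fun h => hab (Fin.val_injective h)
  wlog hlt : (a : ℕ) < (b : ℕ) generalizing a b
  · exact this b a hab.symm hfab.symm habv.symm (by omega)
  set A := (a : ℕ)
  set B := (b : ℕ)
  have hB : B ≤ k ^ s := by have := b.isLt; omega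
  set p := (B - A) * s with hp_def
  have hp : 0 < p := Nat.mul_pos (by omega) hs
  have hple : p ≤ s * k ^ s := by
    calc p ≤ k ^ s * s := Nat.mul_le_mul_right s (by omega)
    _ = s * k ^ s := Nat.mul_comm _ _
  have hBs : B * s = A * s + p := by
    rw [hp_def, Nat.sub_mul]
    have := Nat.mul_le_mul_right s hlt.le
    omega
  have hsp : s ≤ p := by
    rw [hp_def]
    exact Nat.le_mul_of_pos_left s (by omega)
  have hW : ∀ t : ℕ, t < s → c ((A * s + t : ℕ) : ℤ) = c ((B * s + t : ℕ) : ℤ) :=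
    fun t ht => congrFun hfab ⟨t, ht⟩
  have hW' : ∀ x : ℤ, ((A * s : ℕ) : ℤ) ≤ x → x < ((A * s : ℕ) : ℤ) + (s : ℤ) →
      c (x + (p : ℤ)) = c x := by
    intro x h1 h2
    set t := (x - ((A * s : ℕ) : ℤ)).toNat with ht_def
    have h3 := hW t (by omega)
    have e1 : ((A * s + t : ℕ) : ℤ) = x := by push_cast; omega
    have e2 : ((B * s + t : ℕ) : ℤ) = x + (p : ℤ) := by
      push_cast [hBs]; omega
    rw [e1, e2] at h3
    exact h3.symm
  refine ⟨fun i => c (((A * s : ℕ) : ℤ) + (i - ((A * s : ℕ) : ℤ)) % (p : ℤ)), p, ?_, hp, hple, ?_⟩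
  · -- properness
    have hpz : (0 : ℤ) < (p : ℤ) := by exact_mod_cast hp
    have hkey : ∀ (i : ℤ) (d : ℕ), d ∈ S →
        c (((A * s : ℕ) : ℤ) + (i + (d : ℤ) - ((A * s : ℕ) : ℤ)) % (p : ℤ)) ≠
        c (((A * s : ℕ) : ℤ) + (i - ((A * s : ℕ) : ℤ)) % (p : ℤ)) := by
      intro i d hd
      have hd1 : 0 < d := hSpos d hd
      have hdd : d ≤ s := hds d hd
      set r := (i - ((A * s : ℕ) : ℤ)) % (p : ℤ) with hr_def
      have hr0 : 0 ≤ r := Int.emod_nonneg _ (by omega)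
      have hrp : r < (p : ℤ) := Int.emod_lt_of_pos _ hpz
      have hmod : (i + (d : ℤ) - ((A * s : ℕ) : ℤ)) % (p : ℤ) = (r + d) % (p : ℤ) := by
        rw [Int.emod_eq_emod_iff_emod_sub_eq_zero]
        have : i + (d : ℤ) - ((A * s : ℕ) : ℤ) - (r + d) = i - ((A * s : ℕ) : ℤ) - r := by ring
        rw [this, hr_def, Int.sub_emod, Int.emod_emod_of_dvd _ dvd_rfl]
        simp
      rw [hmod]
      by_cases h : r + (d : ℤ) < (p : ℤ)
      · rw [Int.emod_eq_of_lt (by omega) h]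
        have hmem : ((((A * s : ℕ) : ℤ) + (r + d)) - (((A * s : ℕ) : ℤ) + r)).natAbs = d := by
          omega
        exact hc _ _ (by rw [hmem]; exact hd)
      · have h2 : (r + (d : ℤ)) % (p : ℤ) = r + d - p := by
          have e : (r + (d : ℤ)) % (p : ℤ) = (r + d - p) % (p : ℤ) := by
            conv_lhs => rw [show r + (d : ℤ) = (r + d - p) + (p : ℤ) * 1 by ring]
            rw [Int.add_mul_emod_self_left]
          rw [e]
          apply Int.emod_eq_of_lt <;> omega
        rw [h2]
        set x := ((A * s : ℕ) : ℤ) + (r + (d : ℤ) - (p : ℤ)) with hx_def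
        have hcx : c (x + (p : ℤ)) = c x := by
          apply hW' x (by omega)
          have : (d : ℤ) ≤ (s : ℤ) := by exact_mod_cast hdd
          omega
        have hxp : x + (p : ℤ) = ((A * s : ℕ) : ℤ) + r + d := by ring
        rw [← hcx, hxp]
        have hmem : ((((A * s : ℕ) : ℤ) + r + d) - (((A * s : ℕ) : ℤ) + r)).natAbs = d := by
          omega
        exact hc _ _ (by rw [hmem]; exact hd)
    intro i j hmem
    set d := (i - j).natAbs with hd_def
    rcases (by omega : i = j + (d : ℤ) ∨ j = i + (d : ℤ)) with h | h
    · rw [h]; exact hkey j d hmem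
    · rw [h]; exact (hkey i d hmem).symm
  · -- periodicity
    intro i
    show c (((A * s : ℕ) : ℤ) + (i + (p : ℤ) - ((A * s : ℕ) : ℤ)) % (p : ℤ)) = _
    have : i + (p : ℤ) - ((A * s : ℕ) : ℤ) = (i - ((A * s : ℕ) : ℤ)) + (p : ℤ) := by ring
    rw [this, show i - ((A * s : ℕ) : ℤ) + (p : ℤ) = i - ((A * s : ℕ) : ℤ) + (p : ℤ) * 1 by ring,
      Int.add_mul_emod_self_left]
end

section
/- Let k ≥ 2 and ℓ ≥ 2 be integers. Then ᾱ({1, k, 2k, …, ℓk}) = 1/(ℓ+1), i.e., the independence ratio of the distance graph generated by {1} ∪ {jk : 1 ≤ j ≤ ℓ} equals 1/(ℓ+1). -/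
open Filter

open Topology


lemma window_sum_le (A : Set ℤ) (M K : ℕ)
    (h : ∀ x : ℤ, (A ∩ Set.Ico x (x + (M:ℤ))).ncard ≤ K) :
    ∀ (T : ℕ) (x : ℤ), (A ∩ Set.Ico x (x + (T * M : ℕ))).ncard ≤ T * K := by
  intro T
  induction T with
  | zero => intro x; simp
  | succ T ih =>
      intro x
      have h1 : (x : ℤ) ≤ x + (T*M : ℕ) := le_add_of_nonneg_right (by positivity)
      have h2 : (x + (T*M:ℕ) : ℤ) ≤ x + (T*M:ℕ) + (M:ℕ) := le_add_of_nonneg_right (by positivity)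
      have hsplit : Set.Ico x (x + ((T+1) * M : ℕ)) =
          Set.Ico x (x + (T*M : ℕ)) ∪ Set.Ico (x + (T*M:ℕ)) ((x + (T*M:ℕ)) + (M:ℕ)) := by
        rw [Set.Ico_union_Ico_eq_Ico h1 h2]
        congr 1
        push_cast; ring
      rw [hsplit, Set.inter_union_distrib_left]
      calc (A ∩ Set.Ico x (x + (T*M:ℕ)) ∪ A ∩ Set.Ico (x + (T*M:ℕ)) ((x + (T*M:ℕ)) + (M:ℕ))).ncard
          ≤ (A ∩ Set.Ico x (x + (T*M:ℕ))).ncard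
            + (A ∩ Set.Ico (x + (T*M:ℕ)) ((x + (T*M:ℕ)) + (M:ℕ))).ncard := Set.ncard_union_le _ _
        _ ≤ T * K + K := add_le_add (ih x) (h _)
        _ = (T+1) * K := by ring

lemma window_sum_eq (A : Set ℤ) (M K : ℕ)
    (h : ∀ x : ℤ, (A ∩ Set.Ico x (x + (M:ℤ))).ncard = K) :
    ∀ (T : ℕ) (x : ℤ), (A ∩ Set.Ico x (x + (T * M : ℕ))).ncard = T * K := by
  intro T
  induction T with
  | zero => intro x; simp
  | succ T ih =>
      intro x
      have h1 : (x : ℤ) ≤ x + (T*M : ℕ) := le_add_of_nonneg_right (by positivity)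
      have h2 : (x + (T*M:ℕ) : ℤ) ≤ x + (T*M:ℕ) + (M:ℕ) := le_add_of_nonneg_right (by positivity)
      have hsplit : Set.Ico x (x + ((T+1) * M : ℕ)) =
          Set.Ico x (x + (T*M : ℕ)) ∪ Set.Ico (x + (T*M:ℕ)) ((x + (T*M:ℕ)) + (M:ℕ)) := by
        rw [Set.Ico_union_Ico_eq_Ico h1 h2]
        congr 1
        push_cast; ring
      have hdisj : Disjoint (A ∩ Set.Ico x (x + (T*M:ℕ)))
          (A ∩ Set.Ico (x + (T*M:ℕ)) ((x + (T*M:ℕ)) + (M:ℕ))) :=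
        (Set.Ico_disjoint_Ico_same).mono Set.inter_subset_right Set.inter_subset_right
      have hf1 : (A ∩ Set.Ico x (x + (T*M:ℕ))).Finite :=
        (Set.finite_Ico _ _).subset Set.inter_subset_right
      have hf2 : (A ∩ Set.Ico (x + (T*M:ℕ)) ((x + (T*M:ℕ)) + (M:ℕ))).Finite :=
        (Set.finite_Ico _ _).subset Set.inter_subset_right
      rw [hsplit, Set.inter_union_distrib_left, Set.ncard_union_eq hdisj hf1 hf2, ih x, h]
      ring


lemma count_le_s7 (A : Set ℤ) (M K : ℕ) (hM : 0 < M)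
    (h : ∀ x : ℤ, (A ∩ Set.Ico x (x + (M:ℤ))).ncard ≤ K) (N : ℕ) :
    (A ∩ Set.Icc (-(N:ℤ)) (N:ℤ)).ncard ≤ ((2*N+1)/M + 1) * K := by
  set T : ℕ := (2*N+1)/M + 1 with hT
  have hTM : 2*N+1 ≤ T*M := by
    have h1 : 2*N+1 < T*M := by
      calc 2*N+1 = M*((2*N+1)/M) + (2*N+1)%M := (Nat.div_add_mod _ _).symm
        _ < M*((2*N+1)/M) + M := by have := Nat.mod_lt (2*N+1) hM; omega
        _ = T*M := by rw [hT]; ring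
    omega
  have hsub : A ∩ Set.Icc (-(N:ℤ)) (N:ℤ) ⊆ A ∩ Set.Ico (-(N:ℤ)) (-(N:ℤ) + (T*M : ℕ)) := by
    apply Set.inter_subset_inter_right
    intro z hz
    simp only [Set.mem_Icc] at hz
    simp only [Set.mem_Ico]
    constructor
    · exact hz.1
    · have : ((2*N+1 : ℕ) : ℤ) ≤ ((T*M : ℕ) : ℤ) := by exact_mod_cast hTM
      push_cast at this ⊢
      omega
  calc (A ∩ Set.Icc (-(N:ℤ)) (N:ℤ)).ncard
      ≤ (A ∩ Set.Ico (-(N:ℤ)) (-(N:ℤ) + (T*M : ℕ))).ncard :=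
        Set.ncard_le_ncard hsub ((Set.finite_Ico _ _).subset Set.inter_subset_right)
    _ ≤ T * K := window_sum_le A M K h T _

lemma count_ge (A : Set ℤ) (M K : ℕ)
    (h : ∀ x : ℤ, (A ∩ Set.Ico x (x + (M:ℤ))).ncard = K) (N : ℕ) :
    ((2*N+1)/M) * K ≤ (A ∩ Set.Icc (-(N:ℤ)) (N:ℤ)).ncard := by
  set T : ℕ := (2*N+1)/M with hT
  have hTM : T*M ≤ 2*N+1 := Nat.div_mul_le_self _ _
  have hsub : A ∩ Set.Ico (-(N:ℤ)) (-(N:ℤ) + (T*M : ℕ)) ⊆ A ∩ Set.Icc (-(N:ℤ)) (N:ℤ) := by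
    apply Set.inter_subset_inter_right
    intro z hz
    simp only [Set.mem_Ico] at hz
    simp only [Set.mem_Icc]
    have : ((T*M : ℕ) : ℤ) ≤ ((2*N+1 : ℕ) : ℤ) := by exact_mod_cast hTM
    push_cast at this
    omega
  calc T * K = (A ∩ Set.Ico (-(N:ℤ)) (-(N:ℤ) + (T*M : ℕ))).ncard := (window_sum_eq A M K h T _).symm
    _ ≤ (A ∩ Set.Icc (-(N:ℤ)) (N:ℤ)).ncard :=
        Set.ncard_le_ncard hsub ((Set.finite_Icc _ _).subset Set.inter_subset_right)


lemma tendsto_helper (c K : ℝ) :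
    Tendsto (fun N : ℕ => c + K / (2*(N:ℝ)+1)) atTop (𝓝 c) := by
  have hg : Tendsto (fun N : ℕ => 2*(N:ℝ)+1) atTop atTop := by
    apply Filter.tendsto_atTop_add_const_right
    exact (tendsto_natCast_atTop_atTop).const_mul_atTop (by norm_num)
  have := (hg.const_div_atTop K)
  have h2 := tendsto_const_nhds (x := c) (f := atTop (α := ℕ)) |>.add this
  simpa using h2

lemma f_nonneg (A : Set ℤ) (N : ℕ) :
    0 ≤ ((A ∩ Set.Icc (-(N : ℤ)) (N : ℤ)).ncard : ℝ) / (2 * (N : ℝ) + 1) := by positivity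

lemma f_le (A : Set ℤ) (M K : ℕ) (hM : 0 < M) (N : ℕ)
    (hcount : (A ∩ Set.Icc (-(N:ℤ)) (N:ℤ)).ncard ≤ ((2*N+1)/M + 1) * K) :
    ((A ∩ Set.Icc (-(N : ℤ)) (N : ℤ)).ncard : ℝ) / (2 * (N : ℝ) + 1)
      ≤ (K:ℝ)/(M:ℝ) + (K:ℝ)/(2*(N:ℝ)+1) := by
  have hpos : (0:ℝ) < 2*(N:ℝ)+1 := by positivity
  have hMpos : (0:ℝ) < (M:ℝ) := by exact_mod_cast hM
  have c1 : ((A ∩ Set.Icc (-(N:ℤ)) (N:ℤ)).ncard : ℝ) ≤ (((2*N+1)/M : ℕ):ℝ) * K + K := by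
    have := (Nat.cast_le (α := ℝ)).mpr hcount
    push_cast at this
    linarith
  have c2 : (((2*N+1)/M : ℕ):ℝ) ≤ (2*(N:ℝ)+1)/M := by
    have := Nat.cast_div_le (α := ℝ) (m := 2*N+1) (n := M)
    push_cast at this
    linarith
  have c3 : ((A ∩ Set.Icc (-(N:ℤ)) (N:ℤ)).ncard : ℝ) ≤ (2*(N:ℝ)+1)/M * K + K := by
    nlinarith [Nat.cast_nonneg (α := ℝ) K]
  rw [div_le_iff₀ hpos]
  calc ((A ∩ Set.Icc (-(N:ℤ)) (N:ℤ)).ncard : ℝ) ≤ (2*(N:ℝ)+1)/M * K + K := c3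
    _ = ((K:ℝ)/(M:ℝ) + (K:ℝ)/(2*(N:ℝ)+1)) * (2*(N:ℝ)+1) := by field_simp

lemma f_ge (A : Set ℤ) (M K : ℕ) (hM : 0 < M) (N : ℕ)
    (hcount : ((2*N+1)/M) * K ≤ (A ∩ Set.Icc (-(N:ℤ)) (N:ℤ)).ncard) :
    (K:ℝ)/(M:ℝ) - (K:ℝ)/(2*(N:ℝ)+1)
      ≤ ((A ∩ Set.Icc (-(N : ℤ)) (N : ℤ)).ncard : ℝ) / (2 * (N : ℝ) + 1) := by
  have hpos : (0:ℝ) < 2*(N:ℝ)+1 := by positivity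
  have hMpos : (0:ℝ) < (M:ℝ) := by exact_mod_cast hM
  have c0 : (2*N+1 : ℕ) < M*((2*N+1)/M) + M := by
    have h1 := Nat.div_add_mod (2*N+1) M
    have h2 := Nat.mod_lt (2*N+1) hM
    omega
  have c1 : (2*(N:ℝ)+1)/M - 1 < (((2*N+1)/M : ℕ):ℝ) := by
    rw [sub_lt_iff_lt_add, div_lt_iff₀ hMpos]
    have := (Nat.cast_lt (α := ℝ)).mpr c0
    push_cast at this
    nlinarith
  have c2 : ((2*(N:ℝ)+1)/M - 1) * K ≤ ((A ∩ Set.Icc (-(N:ℤ)) (N:ℤ)).ncard : ℝ) := by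
    have := (Nat.cast_le (α := ℝ)).mpr hcount
    push_cast at this
    nlinarith [Nat.cast_nonneg (α := ℝ) K]
  calc (K:ℝ)/(M:ℝ) - (K:ℝ)/(2*(N:ℝ)+1)
      = ((2*(N:ℝ)+1)/M - 1) * K / (2*(N:ℝ)+1) := by field_simp
    _ ≤ ((A ∩ Set.Icc (-(N:ℤ)) (N:ℤ)).ncard : ℝ) / (2 * (N : ℝ) + 1) := by gcongr

lemma density_le_aux (A : Set ℤ) (M K : ℕ) (hM : 0 < M)
    (h : ∀ N : ℕ, (A ∩ Set.Icc (-(N:ℤ)) (N:ℤ)).ncard ≤ ((2*N+1)/M + 1) * K) :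
    density A ≤ (K:ℝ)/(M:ℝ) := by
  have hub : ∀ N : ℕ, ((A ∩ Set.Icc (-(N : ℤ)) (N : ℤ)).ncard : ℝ) / (2 * (N : ℝ) + 1)
      ≤ (K:ℝ)/(M:ℝ) + (K:ℝ)/(2*(N:ℝ)+1) := fun N => f_le A M K hM N (h N)
  have hu := tendsto_helper ((K:ℝ)/(M:ℝ)) K
  have hle := Filter.limsup_le_limsup (Filter.Eventually.of_forall hub)
    (Filter.isCoboundedUnder_le_of_le atTop (f_nonneg A))
    (hu.isBoundedUnder_le)
  rw [hu.limsup_eq] at hle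
  exact hle

lemma density_eq_aux (A : Set ℤ) (M K : ℕ) (hM : 0 < M)
    (h1 : ∀ N : ℕ, (A ∩ Set.Icc (-(N:ℤ)) (N:ℤ)).ncard ≤ ((2*N+1)/M + 1) * K)
    (h2 : ∀ N : ℕ, ((2*N+1)/M) * K ≤ (A ∩ Set.Icc (-(N:ℤ)) (N:ℤ)).ncard) :
    density A = (K:ℝ)/(M:ℝ) := by
  have hu := tendsto_helper ((K:ℝ)/(M:ℝ)) K
  have hl : Tendsto (fun N : ℕ => (K:ℝ)/(M:ℝ) - K / (2*(N:ℝ)+1)) atTop (𝓝 ((K:ℝ)/(M:ℝ))) := by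
    have := tendsto_helper ((K:ℝ)/(M:ℝ)) (-K)
    simpa [sub_eq_add_neg, neg_div] using this
  have hsq : Tendsto (fun N : ℕ => ((A ∩ Set.Icc (-(N : ℤ)) (N : ℤ)).ncard : ℝ) / (2 * (N : ℝ) + 1))
      atTop (𝓝 ((K:ℝ)/(M:ℝ))) := by
    apply tendsto_of_tendsto_of_tendsto_of_le_of_le hl hu
    · exact fun N => f_ge A M K hM N (h2 N)
    · exact fun N => f_le A M K hM N (h1 N)
  exact hsq.limsup_eq


lemma mem_S_of (k ℓ : ℕ) (v : ℕ) (hv : k ∣ v) (h1 : v ≠ 0) (h2 : v < k*(ℓ+1)) :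
    v ∈ insert 1 ((Finset.Icc 1 ℓ).image fun j => j * k) := by
  obtain ⟨j, rfl⟩ := hv
  apply Finset.mem_insert_of_mem
  rw [Finset.mem_image]
  refine ⟨j, Finset.mem_Icc.mpr ⟨?_, ?_⟩, mul_comm j k⟩
  · rcases Nat.eq_zero_or_pos j with h | h
    · simp [h] at h1
    · exact h
  · by_contra hc
    push_neg at hc
    have : k*(ℓ+1) ≤ k*j := Nat.mul_le_mul_left k hc
    omega

lemma indep_window (k ℓ : ℕ) (hk : 2 ≤ k) (A : Set ℤ)
    (hA : IsIndepSet (insert 1 ((Finset.Icc 1 ℓ).image fun j => j * k)) A) (x : ℤ) :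
    (A ∩ Set.Ico x (x + ((k*(ℓ+1) : ℕ) : ℤ))).ncard ≤ k := by
  have hkz : (0:ℤ) < (k:ℤ) := by positivity
  have key : (A ∩ Set.Ico x (x + ((k*(ℓ+1) : ℕ) : ℤ))).ncard
      ≤ ((Finset.range k : Finset ℕ) : Set ℕ).ncard := by
    apply Set.ncard_le_ncard_of_injOn (fun n : ℤ => (n % (k:ℤ)).toNat)
    · intro a _
      simp only [Finset.coe_range, Set.mem_Iio]
      have h1 : 0 ≤ a % (k:ℤ) := Int.emod_nonneg a (by omega)
      have h2 : a % (k:ℤ) < k := Int.emod_lt_of_pos a hkz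
      omega
    · rintro a ⟨haA, hax⟩ b ⟨hbA, hbx⟩ hab
      by_contra hne
      simp only at hab
      have ha0 : 0 ≤ a % (k:ℤ) := Int.emod_nonneg a (by omega)
      have hb0 : 0 ≤ b % (k:ℤ) := Int.emod_nonneg b (by omega)
      have hmod : a % (k:ℤ) = b % (k:ℤ) := by omega
      have hdvd : (k:ℤ) ∣ a - b := Int.ModEq.dvd (Int.ModEq.symm hmod)
      have hvdvd : k ∣ (a-b).natAbs := by
        rwa [← Int.natAbs_natCast k, Int.natAbs_dvd_natAbs]
      have hv0 : (a-b).natAbs ≠ 0 := by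
        simp only [ne_eq, Int.natAbs_eq_zero, sub_eq_zero]
        exact hne
      have hvlt : (a-b).natAbs < k*(ℓ+1) := by
        simp only [Set.mem_Ico] at hax hbx
        omega
      exact hA a haA b hbA hne (mem_S_of k ℓ _ hvdvd hv0 hvlt)

  rwa [Set.ncard_coe_finset, Finset.card_range] at key


lemma abs_mul_ge (m s : ℤ) (hm : 0 < m) (hs : s ≠ 0) : m ≤ |m * s| := by
  rw [abs_mul, abs_of_pos hm]
  nlinarith [Int.one_le_abs hs, abs_nonneg s]

namespace C

variable (k ℓ : ℕ)

def d : ℕ := Nat.gcd k (ℓ+1)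
def efun (i : ℕ) : ℕ := (i * d k ℓ) / k
def rfun (i : ℕ) : ℤ := (i:ℤ) * ((ℓ:ℤ)+1) + ((d k ℓ : ℤ) - 1) - (efun k ℓ i : ℤ)
def Aset : Set ℤ := {z : ℤ | ∃ t : ℤ, ∃ i : ℕ, i < k ∧ z = ((k*(ℓ+1):ℕ):ℤ) * t + rfun k ℓ i}

variable (hk : 2 ≤ k) (hℓ : 2 ≤ ℓ)
include hk

lemma d_pos : 0 < d k ℓ := Nat.gcd_pos_of_pos_right k (Nat.succ_pos ℓ)

lemma d_le_k : d k ℓ ≤ k := Nat.le_of_dvd (by omega) (Nat.gcd_dvd_left _ _)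

lemma e_mono {i j : ℕ} (hij : i ≤ j) : efun k ℓ i ≤ efun k ℓ j :=
  Nat.div_le_div_right (Nat.mul_le_mul_right _ hij)

lemma e_step {i j : ℕ} (hij : i ≤ j) : efun k ℓ j ≤ efun k ℓ i + (j - i) := by
  have h1 : j * d k ℓ ≤ i * d k ℓ + (j - i) * k := by
    have : (j - i) * d k ℓ ≤ (j - i) * k := Nat.mul_le_mul_left _ (d_le_k k ℓ hk)
    have hj : j * d k ℓ = i * d k ℓ + (j - i) * d k ℓ := by
      rw [← Nat.add_mul]; congr 1; omega
    omega
  calc efun k ℓ j = (j * d k ℓ) / k := rfl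
    _ ≤ (i * d k ℓ + (j - i) * k) / k := Nat.div_le_div_right h1
    _ = efun k ℓ i + (j - i) := Nat.add_mul_div_right _ _ (by omega)

lemma e_lt_d {i : ℕ} (hi : i < k) : efun k ℓ i < d k ℓ := by
  rw [efun, Nat.div_lt_iff_lt_mul (by omega : 0 < k)]
  calc i * d k ℓ < k * d k ℓ := by
        have hd := d_pos k ℓ hk
        exact (Nat.mul_lt_mul_right hd).mpr hi
    _ = d k ℓ * k := Nat.mul_comm _ _

include hℓ

lemma r_diff {i j : ℕ} (hij : i < j) (hj : j < k) :
    2 ≤ rfun k ℓ j - rfun k ℓ i ∧ rfun k ℓ j - rfun k ℓ i ≤ ((k*(ℓ+1):ℕ):ℤ) - 3 := by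
  have h1 : efun k ℓ i ≤ efun k ℓ j := e_mono k ℓ hk (le_of_lt hij)
  have h2 : efun k ℓ j ≤ efun k ℓ i + (j - i) := e_step k ℓ hk (le_of_lt hij)
  have hD : rfun k ℓ j - rfun k ℓ i
      = ((j:ℤ) - i) * ((ℓ:ℤ)+1) - ((efun k ℓ j : ℤ) - (efun k ℓ i : ℤ)) := by
    unfold rfun; ring
  have hji : (1:ℤ) ≤ (j:ℤ) - i := by exact_mod_cast (by omega : (1:ℤ) ≤ (j:ℤ) - (i:ℤ))
  have hjk : (j:ℤ) - i ≤ (k:ℤ) - 1 := by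
    have : (j:ℤ) < k := by exact_mod_cast hj
    have : (0:ℤ) ≤ i := by positivity
    omega
  have he1 : (0:ℤ) ≤ (efun k ℓ j : ℤ) - (efun k ℓ i : ℤ) := by
    have := (Nat.cast_le (α := ℤ)).mpr h1
    omega
  have he2 : (efun k ℓ j : ℤ) - (efun k ℓ i : ℤ) ≤ (j:ℤ) - i := by
    have := (Nat.cast_le (α := ℤ)).mpr h2
    push_cast at this
    omega
  constructor
  · rw [hD]
    have : ((j:ℤ) - i) * ((ℓ:ℤ)+1) - (((j:ℤ)-i)) ≥ 1 * ((ℓ:ℤ)+1) - 1 := by nlinarith [hji]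
    have hl2 : (2:ℤ) ≤ (ℓ:ℤ) := by exact_mod_cast hℓ
    nlinarith
  · rw [hD]
    have hup : ((j:ℤ) - i) * ((ℓ:ℤ)+1) ≤ ((k:ℤ)-1) * ((ℓ:ℤ)+1) := by
      have hl0 : (0:ℤ) < (ℓ:ℤ)+1 := by positivity
      nlinarith
    have hm : ((k*(ℓ+1):ℕ):ℤ) = (k:ℤ) * ((ℓ:ℤ)+1) := by push_cast; ring
    have hl2 : (2:ℤ) ≤ (ℓ:ℤ) := by exact_mod_cast hℓ
    nlinarith

lemma r_mod {i j : ℕ} (hij : i < j) (hj : j < k) :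
    ¬ ((k:ℤ) ∣ rfun k ℓ j - rfun k ℓ i) := by
  intro hdvd
  have hd0 := d_pos k ℓ hk
  have hk0 : 0 < k := by omega
  have hddvdk : d k ℓ ∣ k := Nat.gcd_dvd_left _ _
  have hddvdl : d k ℓ ∣ (ℓ+1) := Nat.gcd_dvd_right _ _
  have h1 : efun k ℓ i ≤ efun k ℓ j := e_mono k ℓ hk (le_of_lt hij)
  have hD : rfun k ℓ j - rfun k ℓ i
      = ((j:ℤ) - i) * ((ℓ:ℤ)+1) - ((efun k ℓ j : ℤ) - (efun k ℓ i : ℤ)) := by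
    unfold rfun; ring
  -- d divides the e-difference
  have hdz : ((d k ℓ : ℕ):ℤ) ∣ ((efun k ℓ j : ℤ) - (efun k ℓ i : ℤ)) := by
    have h2 : ((d k ℓ : ℕ):ℤ) ∣ rfun k ℓ j - rfun k ℓ i :=
      dvd_trans (Int.natCast_dvd_natCast.mpr hddvdk) hdvd
    have h3 : ((d k ℓ : ℕ):ℤ) ∣ ((j:ℤ) - i) * ((ℓ:ℤ)+1) := by
      apply Dvd.dvd.mul_left
      have : ((d k ℓ : ℕ):ℤ) ∣ ((ℓ+1 : ℕ):ℤ) := Int.natCast_dvd_natCast.mpr hddvdl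
      push_cast at this
      exact this
    rw [hD] at h2
    exact (dvd_sub_right h3).mp h2
  have hediff : d k ℓ ∣ (efun k ℓ j - efun k ℓ i) := by
    have : ((efun k ℓ j - efun k ℓ i : ℕ):ℤ) = (efun k ℓ j : ℤ) - (efun k ℓ i : ℤ) := by
      push_cast [h1]; ring
    rw [← Int.natCast_dvd_natCast, this]
    exact hdz
  have heeq : efun k ℓ j = efun k ℓ i := by
    have hlt : efun k ℓ j - efun k ℓ i < d k ℓ := by
      have := e_lt_d k ℓ hk hj
      omega
    have := Nat.eq_zero_of_dvd_of_lt hediff hlt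
    omega
  -- now k ∣ (j-i)(ℓ+1) in ℕ
  have hkdvd : k ∣ (j - i) * (ℓ+1) := by
    rw [← Int.natCast_dvd_natCast]
    have : ((j - i) * (ℓ+1) : ℕ) = ((j:ℤ) - i) * ((ℓ:ℤ)+1) := by
      push_cast [le_of_lt hij]; ring
    rw [this]
    have := hdvd
    rw [hD, heeq] at this
    simpa using this
  -- derive (k/d) ∣ (j - i)
  set dd := d k ℓ with hdd
  obtain ⟨t, ht⟩ := hkdvd
  have hq : (j - i) * ((ℓ+1)/dd) = (k/dd) * t := by
    have h5 : ((j - i) * (ℓ+1))/dd = (j-i) * ((ℓ+1)/dd) := Nat.mul_div_assoc _ hddvdl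
    have h6 : (k * t)/dd = (k/dd) * t := by
      rw [Nat.mul_comm k t, Nat.mul_div_assoc _ hddvdk, Nat.mul_comm]
    rw [← h5, ht, h6]
  have hcop : Nat.Coprime (k/dd) ((ℓ+1)/dd) := Nat.coprime_div_gcd_div_gcd hd0
  have hdvdji : (k/dd) ∣ (j - i) := by
    apply Nat.Coprime.dvd_of_dvd_mul_right hcop
    exact ⟨t, hq⟩
  -- but j - i < k/dd
  have hlt2 : j - i < k/dd := by
    by_contra hcon
    push_neg at hcon
    have hkd : (k/dd) * dd = k := Nat.div_mul_cancel hddvdk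
    have h7 : k ≤ (j - i) * dd := by
      calc k = (k/dd) * dd := hkd.symm
        _ ≤ (j - i) * dd := Nat.mul_le_mul_right _ hcon
    have h8 : i * dd + k ≤ j * dd := by
      have : j * dd = i * dd + (j - i) * dd := by
        rw [← Nat.add_mul]; congr 1; omega
      omega
    have h9 : efun k ℓ i + 1 ≤ efun k ℓ j := by
      calc efun k ℓ i + 1 = (i * dd + k)/k := (Nat.add_div_right _ hk0).symm
        _ ≤ (j * dd)/k := Nat.div_le_div_right h8
        _ = efun k ℓ j := rfl
    omega
  have hji0 : 0 < j - i := by omega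
  have := Nat.le_of_dvd hji0 hdvdji
  omega

lemma r_mod' {i j : ℕ} (hne : i ≠ j) (hi : i < k) (hj : j < k) :
    ¬ ((k:ℤ) ∣ rfun k ℓ i - rfun k ℓ j) := by
  rcases Nat.lt_or_ge i j with h | h
  · intro hd
    have : (k:ℤ) ∣ rfun k ℓ j - rfun k ℓ i := by
      have := dvd_neg.mpr hd
      rwa [neg_sub] at this
    exact r_mod k ℓ hk hℓ h hj this
  · have hji : j < i := by omega
    exact r_mod k ℓ hk hℓ hji hi

lemma Aset_indep :
    ∀ a ∈ Aset k ℓ, ∀ b ∈ Aset k ℓ, a ≠ b →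
      (a - b).natAbs ∉ insert 1 ((Finset.Icc 1 ℓ).image fun j => j * k) := by
  rintro a ⟨t₁, i, hi, rfl⟩ b ⟨t₂, j, hj, rfl⟩ hne hmem
  set m : ℤ := ((k*(ℓ+1):ℕ):ℤ) with hm
  have hmval : m = (k:ℤ)*((ℓ:ℤ)+1) := by rw [hm]; push_cast; ring
  have hm2 : (6:ℤ) ≤ m := by
    rw [hmval]
    nlinarith [show (2:ℤ) ≤ (k:ℤ) from by exact_mod_cast hk,
      show (2:ℤ) ≤ (ℓ:ℤ) from by exact_mod_cast hℓ]
  have hmpos : (0:ℤ) < m := by omega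
  set a := m * t₁ + rfun k ℓ i with ha
  set b := m * t₂ + rfun k ℓ j with hb
  have hab : a - b = m * (t₁ - t₂) + (rfun k ℓ i - rfun k ℓ j) := by rw [ha, hb]; ring
  rw [Finset.mem_insert, Finset.mem_image] at hmem
  rcases hmem with h1 | ⟨j', hj', hj'eq⟩
  · -- |a - b| = 1
    have habs1 : |a - b| = 1 := by rw [Int.abs_eq_natAbs, h1]; norm_num
    rcases eq_or_ne i j with rfl | hij
    · have hs : a - b = m * (t₁ - t₂) := by rw [hab]; ring
      have hs0 : t₁ - t₂ ≠ 0 := by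
        intro h0
        apply hne
        have h2 : a - b = 0 := by rw [hs, h0, mul_zero]
        exact sub_eq_zero.mp h2
      have hbig := abs_mul_ge m (t₁ - t₂) hmpos hs0
      rw [← hs, habs1] at hbig
      linarith
    · have hD : 2 ≤ |rfun k ℓ i - rfun k ℓ j| ∧ |rfun k ℓ i - rfun k ℓ j| ≤ m - 3 := by
        rcases Nat.lt_or_ge i j with h | h
        · obtain ⟨c1, c2⟩ := r_diff k ℓ hk hℓ h hj
          constructor
          · rw [abs_sub_comm, abs_of_nonneg (by omega)]; omega
          · rw [abs_sub_comm, abs_of_nonneg (by omega)]; omega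
        · have hji : j < i := by omega
          obtain ⟨c1, c2⟩ := r_diff k ℓ hk hℓ hji hi
          constructor
          · rw [abs_of_nonneg (by omega)]; omega
          · rw [abs_of_nonneg (by omega)]; omega
      rcases eq_or_ne (t₁ - t₂) 0 with h0 | h0
      · have hD0 : a - b = rfun k ℓ i - rfun k ℓ j := by
          rw [hab, h0, mul_zero, zero_add]
        rw [← hD0, habs1] at hD
        linarith [hD.1]
      · have hbig := abs_mul_ge m (t₁ - t₂) hmpos h0
        have heq : m * (t₁ - t₂) = (a - b) - (rfun k ℓ i - rfun k ℓ j) := by rw [hab]; ring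
        have htri : |(a - b) - (rfun k ℓ i - rfun k ℓ j)|
            ≤ |a - b| + |rfun k ℓ i - rfun k ℓ j| := by
          calc |(a - b) - (rfun k ℓ i - rfun k ℓ j)|
              = |(a - b) + (-(rfun k ℓ i - rfun k ℓ j))| := by ring_nf
            _ ≤ |a - b| + |(-(rfun k ℓ i - rfun k ℓ j))| := abs_add_le _ _
            _ = |a - b| + |rfun k ℓ i - rfun k ℓ j| := by rw [abs_neg]
        rw [heq] at hbig
        rw [habs1] at htri
        linarith [hD.2]
  · -- |a - b| = j' * k
    have hkdvd : (k:ℤ) ∣ a - b := by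
      have h1 : k ∣ (a - b).natAbs := by
        rw [← hj'eq]
        exact dvd_mul_left k j'
      rwa [← Int.natAbs_natCast k, Int.natAbs_dvd_natAbs] at h1
    have hkm : (k:ℤ) ∣ m := by
      rw [hmval]
      exact dvd_mul_right _ _
    rcases eq_or_ne i j with rfl | hij
    · have hs : a - b = m * (t₁ - t₂) := by rw [hab]; ring
      have hs0 : t₁ - t₂ ≠ 0 := by
        intro h0
        apply hne
        have h2 : a - b = 0 := by rw [hs, h0, mul_zero]
        exact sub_eq_zero.mp h2
      have hbig := abs_mul_ge m (t₁ - t₂) hmpos hs0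
      rw [← hs] at hbig
      have hsmall : |a - b| < m := by
        rw [Int.abs_eq_natAbs, ← hj'eq, hmval]
        rw [Finset.mem_Icc] at hj'
        push_cast
        have h2 : (j' : ℤ) ≤ (ℓ:ℤ) := by exact_mod_cast hj'.2
        have h3 : (0:ℤ) < (k:ℤ) := by positivity
        nlinarith
      linarith
    · have hDdvd : (k:ℤ) ∣ rfun k ℓ i - rfun k ℓ j := by
        have h2 : rfun k ℓ i - rfun k ℓ j = (a - b) - m * (t₁ - t₂) := by rw [hab]; ring
        rw [h2]
        exact dvd_sub hkdvd (Dvd.dvd.mul_right hkm _)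
      exact r_mod' k ℓ hk hℓ hij hi hj hDdvd

lemma Aset_window (x : ℤ) :
    (Aset k ℓ ∩ Set.Ico x (x + ((k*(ℓ+1):ℕ):ℤ))).ncard = k := by
  set m : ℤ := ((k*(ℓ+1):ℕ):ℤ) with hm
  have hmpos : (0:ℤ) < m := by
    rw [hm]
    have : 0 < k * (ℓ+1) := by positivity
    exact_mod_cast this
  set g : ℕ → ℤ := fun i => x + (rfun k ℓ i - x) % m with hg
  have hset : Aset k ℓ ∩ Set.Ico x (x + m) = ↑((Finset.range k).image g) := by
    ext z
    rw [Finset.coe_image, Set.mem_image, Set.mem_inter_iff, Set.mem_Ico]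
    constructor
    · rintro ⟨⟨t, i, hi, rfl⟩, hz1, hz2⟩
      refine ⟨i, by simpa using hi, ?_⟩
      have h1 : (rfun k ℓ i - x) % m = (m * t + rfun k ℓ i - x) % m := by
        have h2 : m * t + rfun k ℓ i - x = (rfun k ℓ i - x) + m * t := by ring
        rw [h2, Int.add_mul_emod_self_left]
      have hz1' : 0 ≤ m * t + rfun k ℓ i - x := by rw [hm]; omega
      have hz2' : m * t + rfun k ℓ i - x < m := by rw [hm]; omega
      have h3 : (m * t + rfun k ℓ i - x) % m = m * t + rfun k ℓ i - x :=
        Int.emod_eq_of_lt hz1' hz2'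
      rw [hg]
      simp only []
      rw [h1, h3]
      ring
    · rintro ⟨i, hi, rfl⟩
      have hi' : i < k := by simpa using hi
      refine ⟨⟨-((rfun k ℓ i - x) / m), i, hi', ?_⟩, ?_, ?_⟩
      · rw [hg]
        simp only []
        rw [Int.emod_def]
        ring
      · have := Int.emod_nonneg (rfun k ℓ i - x) (ne_of_gt hmpos)
        rw [hg]
        simp only []
        omega
      · have := Int.emod_lt_of_pos (rfun k ℓ i - x) hmpos
        rw [hg]
        simp only []
        omega
  rw [hset, Set.ncard_coe_finset]
  rw [Finset.card_image_of_injOn, Finset.card_range]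
  intro i hi j hj hgij
  simp only [Finset.coe_range, Set.mem_Iio] at hi hj
  by_contra hij
  apply r_mod' k ℓ hk hℓ hij hi hj
  have h1 : (rfun k ℓ i - x) % m = (rfun k ℓ j - x) % m := by
    have := hgij
    rw [hg] at this
    simp only [] at this
    omega
  have h2 : m ∣ (rfun k ℓ i - x) - (rfun k ℓ j - x) := Int.ModEq.dvd (Int.ModEq.symm h1)
  have h3 : (rfun k ℓ i - x) - (rfun k ℓ j - x) = rfun k ℓ i - rfun k ℓ j := by ring
  rw [h3] at h2
  have hkm : (k:ℤ) ∣ m := by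
    rw [hm]
    have : (k:ℕ) ∣ k * (ℓ+1) := dvd_mul_right _ _
    exact_mod_cast this
  exact dvd_trans hkm h2

end C


/-- For `k, ℓ ≥ 2`, the independence ratio of `G({1, k, 2k, ..., ℓk})` is `1/(ℓ+1)`. -/
theorem indRatio_one_multiples (k ℓ : ℕ) (hk : 2 ≤ k) (hℓ : 2 ≤ ℓ) :
    indRatio (insert 1 ((Finset.Icc 1 ℓ).image fun j => j * k)) = 1 / ((ℓ : ℝ) + 1) := by
  set S := insert 1 ((Finset.Icc 1 ℓ).image fun j => j * k) with hS
  set M := k * (ℓ+1) with hM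
  have hM0 : 0 < M := by positivity
  have hkM : (k:ℝ)/(M:ℝ) = 1/((ℓ:ℝ)+1) := by
    rw [hM]
    push_cast
    rw [div_eq_div_iff (by positivity) (by positivity)]
    ring
  have hupper : ∀ r ∈ density '' {A : Set ℤ | IsIndepSet S A}, r ≤ 1/((ℓ:ℝ)+1) := by
    rintro r ⟨A, hA, rfl⟩
    rw [← hkM]
    apply density_le_aux A M k hM0
    intro N
    apply count_le_s7 A M k hM0
    intro x
    exact indep_window k ℓ hk A hA x
  have hmem : 1/((ℓ:ℝ)+1) ∈ density '' {A : Set ℤ | IsIndepSet S A} := by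
    refine ⟨C.Aset k ℓ, ?_, ?_⟩
    · exact C.Aset_indep k ℓ hk hℓ
    · rw [← hkM]
      apply density_eq_aux (C.Aset k ℓ) M k hM0
      · intro N
        apply count_le_s7 _ _ _ hM0
        intro x
        exact le_of_eq (C.Aset_window k ℓ hk hℓ x)
      · intro N
        apply count_ge
        intro x
        exact C.Aset_window k ℓ hk hℓ x
  rw [indRatio]
  apply le_antisymm
  · exact csSup_le ⟨_, hmem⟩ hupper
  · exact le_csSup ⟨1/((ℓ:ℝ)+1), hupper⟩ hmem
end

section
/- Local Discharging Lemma: Let S be a finite nonempty set of positive integers, let a, b, t ≥ 1 and c ≥ 0 be integers, and let X be a nonempty periodic independent set in G(S) with period p; let x : ℤ → ℤ be the strictly increasing enumeration of X and let r = |X ∩ [0, p−1]| (so x_{i+r} = x_i + p for all i). Define the initial charge μ(i) = a(x_{i+1} − x_i) − b for each i ∈ ℤ. Suppose d : ℤ × ℤ → ℤ satisfies: d(i,j) = −d(j,i) for all i,j; there is an integer m ≥ 0 with d(i,j) = 0 whenever |i−j| > m; and d(i+r, j+r) = d(i,j) for all i,j. Define μ*(i) = μ(i) + Σ_{j∈ℤ}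 d(j,i) and ν*(j) = Σ_{i=j}^{j+t−1} μ*(i). Suppose d' : ℤ × ℤ → ℤ satisfies the same three conditions (antisymmetry, vanishing when |i−j| exceeds some fixed m', and invariance under shifting both arguments by r), and define ν'(j) = ν*(j) + Σ_{k∈ℤ} d'(k,j). If ν'(j) ≥ c for all j ∈ ℤ, then δ(X) ≤ at/(bt+c). -/
open Filter

private lemma ico_singleton (a : ℤ) : Finset.Ico a (a + 1) = {a} := by
  ext z; simp [Int.lt_add_one_iff, le_antisymm_iff, and_comm]

private lemma sum_split (f : ℤ → ℤ) {s u v : ℤ} (h1 : s ≤ u) (h2 : u ≤ v) :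
    ∑ i ∈ Finset.Ico s v, f i
      = ∑ i ∈ Finset.Ico s u, f i + ∑ i ∈ Finset.Ico u v, f i := by
  rw [← Finset.sum_union (Finset.Ico_disjoint_Ico_consecutive s u v),
    Finset.Ico_union_Ico_eq_Ico h1 h2]

/-- telescoping sums over `Ico 0 n` of `f (i+1) - f i`. -/
private lemma telescope (f : ℤ → ℤ) : ∀ n : ℕ,
    ∑ i ∈ Finset.Ico (0:ℤ) (n:ℤ), (f (i+1) - f i) = f n - f 0 := by
  intro n
  induction n with
  | zero => simp
  | succ n ih =>
    rw [show ((n+1:ℕ):ℤ) = (n:ℤ)+1 from by push_cast; ring,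
      sum_split _ (Int.natCast_nonneg n) (by omega), ih, ico_singleton, Finset.sum_singleton]
    ring

/-- sums of a periodic function over windows of full period length are constant. -/
private lemma window_const_s8 (g : ℤ → ℤ) (r : ℤ) (hr : 0 < r)
    (hper : ∀ i, g (i + r) = g i) (s : ℤ) :
    ∑ i ∈ Finset.Ico s (s + r), g i = ∑ i ∈ Finset.Ico (0:ℤ) r, g i := by
  have step : ∀ u : ℤ, ∑ i ∈ Finset.Ico (u+1) (u+1+r), g i = ∑ i ∈ Finset.Ico u (u+r), g i := by
    intro u
    have e0 : u + 1 + r = u + r + 1 := by ring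
    have e1 : ∑ i ∈ Finset.Ico u (u+r+1), g i
        = ∑ i ∈ Finset.Ico u (u+1), g i + ∑ i ∈ Finset.Ico (u+1) (u+r+1), g i :=
      sum_split g (by omega) (by omega)
    have e2 : ∑ i ∈ Finset.Ico u (u+r+1), g i
        = ∑ i ∈ Finset.Ico u (u+r), g i + ∑ i ∈ Finset.Ico (u+r) (u+r+1), g i :=
      sum_split g (by omega) (by omega)
    rw [e1] at e2
    rw [ico_singleton, Finset.sum_singleton] at e2
    rw [ico_singleton, Finset.sum_singleton, hper u] at e2
    rw [e0]
    omega
  induction s using Int.induction_on with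
  | zero => simp
  | succ k ih => rw [step (k:ℤ), ih]
  | pred k ih =>
    have := step (-(k:ℤ)-1)
    rw [show (-(k:ℤ)-1+1) = -(k:ℤ) from by ring] at this
    rw [show (-((k:ℕ):ℤ)-1 : ℤ) = (-(k:ℤ)-1) from by push_cast; ring] at *
    rw [← this]
    exact ih


private lemma shift_iterate (d : ℤ → ℤ → ℤ) (r : ℤ)
    (hshift : ∀ i j, d (i + r) (j + r) = d i j) :
    ∀ n : ℤ, ∀ i j, d (i + n * r) (j + n * r) = d i j := by
  intro n
  induction n using Int.induction_on with
  | zero => simp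
  | succ k ih =>
    intro i j
    have h1 := hshift (i + (k:ℤ) * r) (j + (k:ℤ) * r)
    rw [ih] at h1
    rw [← h1]; ring_nf
  | pred k ih =>
    intro i j
    have h1 := hshift (i + (-(k:ℤ)-1) * r) (j + (-(k:ℤ)-1) * r)
    have h2 : i + (-(k:ℤ)-1) * r + r = i + (-(k:ℤ)) * r := by ring
    have h3 : j + (-(k:ℤ)-1) * r + r = j + (-(k:ℤ)) * r := by ring
    rw [h2, h3, ih] at h1
    exact h1.symm

/-- the inner finsum is a finite sum over any window containing the support -/
private lemma finsum_eval (d : ℤ → ℤ → ℤ) (m : ℤ)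
    (hloc : ∀ i j, m < |i - j| → d i j = 0) (i : ℤ) (s : Finset ℤ)
    (hs : Finset.Icc (i - m) (i + m) ⊆ s) :
    ∑ᶠ j : ℤ, d j i = ∑ j ∈ s, d j i := by
  apply finsum_eq_finset_sum_of_support_subset
  intro j hj
  simp only [Function.mem_support] at hj
  apply hs
  simp only [Finset.mem_Icc]
  by_contra h
  exact hj (hloc j i (by rcases abs_cases (j - i) with ⟨h1,h2⟩|⟨h1,h2⟩ <;> omega))

private lemma conserve (r : ℤ) (hr : 0 < r) (d : ℤ → ℤ → ℤ)
    (hanti : ∀ i j, d i j = - d j i)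
    (m : ℤ) (hloc : ∀ i j, m < |i - j| → d i j = 0)
    (hshift : ∀ i j, d (i + r) (j + r) = d i j) :
    ∑ i ∈ Finset.Ico (0:ℤ) r, ∑ᶠ j : ℤ, d j i = 0 := by
  have hrw : ∀ i ∈ Finset.Ico (0:ℤ) r,
      ∑ᶠ j : ℤ, d j i = ∑ j ∈ Finset.Ico (-m) (r+m), d j i := by
    intro i hi
    simp only [Finset.mem_Ico] at hi
    apply finsum_eval d m hloc
    intro j hj
    simp only [Finset.mem_Icc] at hj
    simp only [Finset.mem_Ico]
    omega
  rw [Finset.sum_congr rfl hrw, ← Finset.sum_product']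
  rw [← Finset.sum_filter_ne_zero]
  set s := Finset.filter (fun q : ℤ × ℤ => d q.2 q.1 ≠ 0)
      (Finset.Ico (0:ℤ) r ×ˢ Finset.Ico (-m) (r+m)) with hs
  have key : ∀ q ∈ s, q.1 ∈ Finset.Ico (0:ℤ) r ∧ q.2 ∈ Finset.Ico (-m) (r+m)
      ∧ d q.2 q.1 ≠ 0 := by
    intro q hq
    simp only [hs, Finset.mem_filter, Finset.mem_product] at hq
    exact ⟨hq.1.1, hq.1.2, hq.2⟩
  apply Finset.sum_involution
    (g := fun q _ => ((q.2 % r : ℤ), q.1 - r * (q.2 / r)))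
  · -- f a + f (g a) = 0
    intro q hq
    have h1 : q.2 % r = q.2 - r * (q.2 / r) := by
      have := Int.mul_ediv_add_emod q.2 r; omega
    have h2 : d (q.1 - r * (q.2 / r)) (q.2 % r) = d q.1 q.2 := by
      rw [h1]
      have := shift_iterate d r hshift (-(q.2 / r)) q.1 q.2
      rw [show q.1 + -(q.2/r) * r = q.1 - r * (q.2/r) from by ring,
        show q.2 + -(q.2/r) * r = q.2 - r * (q.2/r) from by ring] at this
      exact this
    simp only [h2]
    rw [hanti q.2 q.1]
    ring
  · -- g a ≠ a when f a ≠ 0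
    intro q hq hne heq
    have h1 : q.2 % r = q.2 - r * (q.2 / r) := by
      have := Int.mul_ediv_add_emod q.2 r; omega
    have e1 : q.2 % r = q.1 := congrArg Prod.fst heq
    have e2 : q.1 - r * (q.2 / r) = q.2 := congrArg Prod.snd heq
    have : q.1 = q.2 := by omega
    apply hne
    rw [this]
    have := hanti q.2 q.2
    omega
  · -- g maps into s
    intro q hq
    obtain ⟨h1, h2, h3⟩ := key q hq
    simp only [Finset.mem_Ico] at h1 h2
    have hm1 : 0 ≤ q.2 % r := Int.emod_nonneg _ (by omega)
    have hm2 : q.2 % r < r := Int.emod_lt_of_pos _ hr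
    have hmod : q.2 % r = q.2 - r * (q.2 / r) := by
      have := Int.mul_ediv_add_emod q.2 r; omega
    have habs : |q.2 - q.1| ≤ m := by
      by_contra h
      exact h3 (hloc q.2 q.1 (by omega))
    rw [abs_le] at habs
    have hd2 : d (q.1 - r * (q.2 / r)) (q.2 % r) = d q.1 q.2 := by
      rw [hmod]
      have := shift_iterate d r hshift (-(q.2 / r)) q.1 q.2
      rw [show q.1 + -(q.2/r) * r = q.1 - r * (q.2/r) from by ring,
        show q.2 + -(q.2/r) * r = q.2 - r * (q.2/r) from by ring] at this
      exact this
    simp only [hs, Finset.mem_filter, Finset.mem_product, Finset.mem_Ico]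
    refine ⟨⟨⟨hm1, hm2⟩, ?_, ?_⟩, ?_⟩
    · omega
    · omega
    · rw [hd2, hanti q.1 q.2]
      simpa using h3
  · -- involutive
    intro q hq
    obtain ⟨h1, h2, h3⟩ := key q hq
    simp only [Finset.mem_Ico] at h1
    have hmod : q.2 % r = q.2 - r * (q.2 / r) := by
      have := Int.mul_ediv_add_emod q.2 r; omega
    set k := q.2 / r with hk
    -- first component of g (g q): (q.1 - r*k) % r = q.1
    have hq1mod : (q.1 - r * k) % r = q.1 := by
      have : q.1 - r * k = q.1 + r * (-k) := by ring
      rw [this, Int.add_mul_emod_self_left, Int.emod_eq_of_lt h1.1 h1.2]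
    have hdiv : r * ((q.1 - r * k) / r) = - (r * k) := by
      have := Int.mul_ediv_add_emod (q.1 - r * k) r
      rw [hq1mod] at this
      omega
    apply Prod.ext
    · simpa using hq1mod
    · simp only
      omega


private lemma finsum_eval' (d : ℤ → ℤ → ℤ) (m : ℤ)
    (hloc : ∀ i j, m < |i - j| → d i j = 0) (i : ℤ) :
    ∑ᶠ j : ℤ, d j i = ∑ j ∈ Finset.Icc (i - m) (i + m), d j i := by
  apply finsum_eq_finset_sum_of_support_subset
  intro j hj
  simp only [Function.mem_support] at hj
  simp only [Finset.coe_Icc, Set.mem_Icc]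
  by_contra h
  exact hj (hloc j i (by rcases abs_cases (j - i) with ⟨h1,h2⟩|⟨h1,h2⟩ <;> omega))

private lemma finsum_shift (d : ℤ → ℤ → ℤ) (r m : ℤ)
    (hloc : ∀ i j, m < |i - j| → d i j = 0)
    (hshift : ∀ i j, d (i + r) (j + r) = d i j) (i : ℤ) :
    ∑ᶠ j : ℤ, d j (i + r) = ∑ᶠ j : ℤ, d j i := by
  rw [finsum_eval' d m hloc (i + r), finsum_eval' d m hloc i]
  have hmap : Finset.Icc (i + r - m) (i + r + m)
      = Finset.map (addLeftEmbedding r) (Finset.Icc (i - m) (i + m)) := by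
    rw [Finset.map_add_left_Icc]
    congr 1 <;> ring
  rw [hmap, Finset.sum_map]
  apply Finset.sum_congr rfl
  intro j _
  simp only [addLeftEmbedding_apply]
  rw [show r + j = j + r from by ring]
  exact hshift j i

private lemma per_mul (X : Set ℤ) (p : ℤ) (hper : ∀ z : ℤ, z + p ∈ X ↔ z ∈ X) :
    ∀ k : ℤ, ∀ z : ℤ, z + k * p ∈ X ↔ z ∈ X := by
  intro k
  induction k using Int.induction_on with
  | zero => simp
  | succ k ih =>
    intro z
    rw [show z + ((k:ℤ)+1) * p = (z + k * p) + p from by ring, hper, ih]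
  | pred k ih =>
    intro z
    have h := hper (z + (-(k:ℤ)-1) * p)
    rw [show z + (-(k:ℤ)-1)*p + p = z + (-(k:ℤ))*p from by ring, ih] at h
    exact h.symm

private lemma block_count (X : Set ℤ) (p : ℤ) (hp : 0 < p)
    (hper : ∀ z : ℤ, z + p ∈ X ↔ z ∈ X) (j : ℤ) :
    (X ∩ Set.Ico (j*p) (j*p + p)).ncard = (X ∩ Set.Ico 0 p).ncard := by
  have himg : X ∩ Set.Ico (j*p) (j*p + p) = (fun z => z + j*p) '' (X ∩ Set.Ico 0 p) := by
    ext z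
    simp only [Set.mem_inter_iff, Set.mem_Ico, Set.mem_image]
    constructor
    · rintro ⟨hz, h1, h2⟩
      exact ⟨z - j*p, ⟨by rw [← per_mul X p hper j (z - j*p)]; simpa using hz, by omega, by omega⟩,
        by ring⟩
    · rintro ⟨w, ⟨hw, h1, h2⟩, hwz⟩
      subst hwz
      exact ⟨(per_mul X p hper j w).mpr hw, by omega, by omega⟩
  rw [himg, Set.ncard_image_of_injective _ (fun u v h => by omega)]

private lemma multi_block (X : Set ℤ) (p : ℤ) (hp : 0 < p)
    (hper : ∀ z : ℤ, z + p ∈ X ↔ z ∈ X) :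
    ∀ (K : ℕ) (j : ℤ),
      (X ∩ Set.Ico (j*p) (j*p + K*p)).ncard = K * (X ∩ Set.Ico 0 p).ncard := by
  intro K
  induction K with
  | zero => intro j; simp
  | succ K ih =>
    intro j
    have hsplit : Set.Ico (j*p) (j*p + (K+1:ℕ)*p)
        = Set.Ico (j*p) (j*p + K*p) ∪ Set.Ico ((j+K)*p) ((j+K)*p + p) := by
      rw [show (j+(K:ℤ))*p = j*p + K*p from by ring,
        Set.Ico_union_Ico_eq_Ico (by nlinarith [Int.natCast_nonneg K]) (by omega)]
      congr 1
      push_cast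
      ring
    have hdisj : Disjoint (X ∩ Set.Ico (j*p) (j*p + K*p))
        (X ∩ Set.Ico ((j+(K:ℤ))*p) ((j+(K:ℤ))*p + p)) := by
      apply Set.disjoint_of_subset Set.inter_subset_right Set.inter_subset_right
      rw [show (j+(K:ℤ))*p = j*p + K*p from by ring]
      exact Set.Ico_disjoint_Ico_same
    rw [hsplit, Set.inter_union_distrib_left,
      Set.ncard_union_eq hdisj ((Set.finite_Ico _ _).subset Set.inter_subset_right)
        ((Set.finite_Ico _ _).subset Set.inter_subset_right),
      ih, block_count X p hp hper]
    push_cast; ring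



private lemma density_le_aux_s8 (X : Set ℤ) (p : ℤ) (hp : 0 < p)
    (hper : ∀ z : ℤ, z + p ∈ X ↔ z ∈ X) :
    density X ≤ ((X ∩ Set.Ico 0 p).ncard : ℝ) / (p : ℝ) := by
  set R : ℕ := (X ∩ Set.Ico 0 p).ncard with hR
  set f : ℕ → ℝ := fun N => ((X ∩ Set.Icc (-(N : ℤ)) (N : ℤ)).ncard : ℝ) / (2 * (N : ℝ) + 1)
    with hf
  set g : ℕ → ℝ := fun N => ((R:ℝ)/(p:ℝ)) * (1 + (2*(p:ℝ)-1)/(2*(N:ℝ)+1)) with hg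
  have hpR : (0:ℝ) < (p:ℝ) := by exact_mod_cast hp
  have hbound : ∀ N : ℕ, f N ≤ g N := by
    intro N
    have hden : (0:ℝ) < 2*(N:ℝ)+1 := by positivity
    set j : ℤ := (-(N:ℤ))/p with hj
    set Kz : ℤ := (2*(N:ℤ))/p + 2 with hKz
    have hKz0 : 0 ≤ Kz := by
      have := Int.ediv_nonneg (show (0:ℤ) ≤ 2*(N:ℤ) by positivity) hp.le
      omega
    set K : ℕ := Kz.toNat with hK
    have hKK : (K:ℤ) = Kz := Int.toNat_of_nonneg hKz0
    -- j*p ≤ -N < j*p + p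
    have hjp : p * j ≤ -(N:ℤ) ∧ -(N:ℤ) - p < p * j := by
      have h1 : p * j + (-(N:ℤ)) % p = -(N:ℤ) := by rw [hj]; exact Int.mul_ediv_add_emod _ _
      have h2 := Int.emod_nonneg (-(N:ℤ)) (ne_of_gt hp)
      have h3 := Int.emod_lt_of_pos (-(N:ℤ)) hp
      constructor <;> omega
    -- Kz * p ≥ 2N + p + 1
    have hKzp : 2*(N:ℤ) + p + 1 ≤ Kz * p := by
      have h1 := Int.mul_ediv_add_emod (2*(N:ℤ)) p
      have h2 := Int.emod_nonneg (2*(N:ℤ)) (ne_of_gt hp)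
      have h3 := Int.emod_lt_of_pos (2*(N:ℤ)) hp
      have h4 : Kz * p = p * ((2*(N:ℤ))/p) + 2*p := by rw [hKz]; ring
      omega
    have hsub : Set.Icc (-(N:ℤ)) (N:ℤ) ⊆ Set.Ico (j*p) (j*p + K*p) := by
      intro z hz
      simp only [Set.mem_Icc] at hz
      simp only [Set.mem_Ico]
      have e : (K:ℤ) * p = Kz * p := by rw [hKK]
      constructor
      · have := hjp.1; rw [mul_comm j p]; omega
      · have := hjp.2; rw [mul_comm j p]; omega
    have hcard : (X ∩ Set.Icc (-(N:ℤ)) (N:ℤ)).ncard ≤ K * R := by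
      rw [← multi_block X p hp hper K j]
      exact Set.ncard_le_ncard (Set.inter_subset_inter_right X hsub)
        ((Set.finite_Ico _ _).subset Set.inter_subset_right)
    -- real estimate
    have hKreal : (K:ℝ) ≤ (2*(N:ℝ) + 2*(p:ℝ))/(p:ℝ) := by
      rw [le_div_iff₀ hpR]
      have h4 : ((2*(N:ℤ))/p : ℤ) * p ≤ 2*(N:ℤ) := Int.ediv_mul_le _ (ne_of_gt hp)
      have h5 : (K:ℤ) * p ≤ 2*(N:ℤ) + 2*p := by rw [hKK, hKz]; nlinarith
      calc (K:ℝ) * p = (((K:ℤ) * p : ℤ) : ℝ) := by push_cast; ring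
        _ ≤ ((2*(N:ℤ) + 2*p : ℤ) : ℝ) := by exact_mod_cast h5
        _ = (2*(N:ℝ) + 2*(p:ℝ)) := by push_cast; ring
    have hcardR : ((X ∩ Set.Icc (-(N:ℤ)) (N:ℤ)).ncard : ℝ) ≤ (K:ℝ) * (R:ℝ) := by
      exact_mod_cast Nat.cast_le.mpr hcard
    have hgN : g N = ((2*(N:ℝ) + 2*(p:ℝ))/(p:ℝ)) * (R:ℝ) / (2*(N:ℝ)+1) := by
      rw [hg]
      field_simp
      ring
    rw [hf, hgN]
    simp only
    gcongr
    exact hcardR.trans (mul_le_mul_of_nonneg_right hKreal (Nat.cast_nonneg R))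
  -- limit of g
  have hglim : Tendsto g atTop (nhds ((R:ℝ)/(p:ℝ))) := by
    have t1 : Tendsto (fun N : ℕ => (2*(N:ℝ)+1)) atTop atTop := by
      apply tendsto_atTop_add_const_right
      exact (tendsto_natCast_atTop_atTop (R := ℝ)).const_mul_atTop two_pos
    have t2 : Tendsto (fun N : ℕ => (2*(p:ℝ)-1)/(2*(N:ℝ)+1)) atTop (nhds 0) :=
      Tendsto.div_atTop tendsto_const_nhds t1
    have t3 : Tendsto g atTop (nhds (((R:ℝ)/(p:ℝ)) * (1 + 0))) := by
      apply Tendsto.const_mul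
      exact tendsto_const_nhds.add t2
    simpa using t3
  have hfb : IsBoundedUnder (· ≥ ·) atTop f := by
    refine isBoundedUnder_of ⟨0, fun N => ?_⟩
    rw [hf]
    positivity
  calc density X ≤ limsup g atTop := by
        apply limsup_le_limsup (Eventually.of_forall hbound) hfb.isCoboundedUnder_le
          hglim.isBoundedUnder_le
    _ = (R:ℝ)/(p:ℝ) := hglim.limsup_eq

/-- The Local Discharging Lemma: if a two-stage local discharging process on the blocks
and `t`-frames of a periodic independent set `X` in `G(S)` leaves every frame with charge
at least `c`, then the density of `X` is at most `at/(bt+c)`. -/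
theorem local_discharging
    (S : Finset ℕ) (hS : S.Nonempty) (hSpos : ∀ n ∈ S, 0 < n)
    (a b t c : ℤ) (ha : 1 ≤ a) (hb : 1 ≤ b) (ht : 1 ≤ t) (hc : 0 ≤ c)
    (X : Set ℤ) (hXne : X.Nonempty) (hXind : IsIndepSet S X)
    (p : ℤ) (hp : 0 < p) (hper : ∀ z : ℤ, z + p ∈ X ↔ z ∈ X)
    (x : ℤ → ℤ) (hmono : StrictMono x) (hrange : Set.range x = X)
    (r : ℤ) (hr : r = ((X ∩ Set.Ico (0 : ℤ) p).ncard : ℤ))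
    (hxr : ∀ i : ℤ, x (i + r) = x i + p)
    (μ : ℤ → ℤ) (hμ : ∀ i : ℤ, μ i = a * (x (i + 1) - x i) - b)
    (d : ℤ → ℤ → ℤ)
    (hd_anti : ∀ i j : ℤ, d i j = - d j i)
    (m : ℤ) (hm : 0 ≤ m) (hd_local : ∀ i j : ℤ, m < |i - j| → d i j = 0)
    (hd_shift : ∀ i j : ℤ, d (i + r) (j + r) = d i j)
    (μs : ℤ → ℤ) (hμs : ∀ i : ℤ, μs i = μ i + ∑ᶠ j : ℤ, d j i)
    (νs : ℤ → ℤ) (hνs : ∀ j : ℤ, νs j = ∑ i ∈ Finset.Ico j (j + t), μs i)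
    (d' : ℤ → ℤ → ℤ)
    (hd'_anti : ∀ i j : ℤ, d' i j = - d' j i)
    (m' : ℤ) (hm' : 0 ≤ m') (hd'_local : ∀ i j : ℤ, m' < |i - j| → d' i j = 0)
    (hd'_shift : ∀ i j : ℤ, d' (i + r) (j + r) = d' i j)
    (ν' : ℤ → ℤ) (hν' : ∀ j : ℤ, ν' j = νs j + ∑ᶠ k : ℤ, d' k j)
    (hcharge : ∀ j : ℤ, c ≤ ν' j) :
    density X ≤ ((a : ℝ) * (t : ℝ)) / ((b : ℝ) * (t : ℝ) + (c : ℝ)) := by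
  -- r is positive
  have hr0 : (0:ℤ) < r := by
    by_contra h
    push_neg at h
    have h2 : x (0 + r) ≤ x 0 := hmono.le_iff_le.mpr (by omega)
    rw [hxr 0] at h2
    omega
  -- μ is r-periodic
  have hμper : ∀ i : ℤ, μ (i + r) = μ i := by
    intro i
    rw [hμ, hμ]
    have e1 : x (i + r + 1) = x (i + 1) + p := by
      rw [show i + r + 1 = (i + 1) + r from by ring, hxr]
    rw [e1, hxr]
    ring
  -- μs is r-periodic
  have hμsper : ∀ i : ℤ, μs (i + r) = μs i := by
    intro i
    rw [hμs, hμs, hμper, finsum_shift d r m hd_local hd_shift]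
  -- Step A: sum of μ over a period
  have htel : ∑ i ∈ Finset.Ico (0:ℤ) r, (x (i+1) - x i) = p := by
    have hcast : ((r.toNat : ℤ)) = r := Int.toNat_of_nonneg hr0.le
    have := telescope x r.toNat
    rw [hcast] at this
    rw [this]
    have := hxr 0
    rw [zero_add] at this
    omega
  have hcardr : (Finset.Ico (0:ℤ) r).card = r.toNat := by
    rw [Int.card_Ico]
    simp
  have sumμ : ∑ i ∈ Finset.Ico (0:ℤ) r, μ i = a * p - b * r := by
    calc ∑ i ∈ Finset.Ico (0:ℤ) r, μ i
        = ∑ i ∈ Finset.Ico (0:ℤ) r, (a * (x (i+1) - x i) - b) :=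
          Finset.sum_congr rfl (fun i _ => hμ i)
      _ = a * (∑ i ∈ Finset.Ico (0:ℤ) r, (x (i+1) - x i))
            - (Finset.Ico (0:ℤ) r).card • b := by
          rw [Finset.sum_sub_distrib, ← Finset.mul_sum, Finset.sum_const]
      _ = a * p - b * r := by
          rw [htel, hcardr, nsmul_eq_mul, Int.toNat_of_nonneg hr0.le]
          ring
  -- Step B: discharging conserves total charge
  have sumμs : ∑ i ∈ Finset.Ico (0:ℤ) r, μs i = a * p - b * r := by
    calc ∑ i ∈ Finset.Ico (0:ℤ) r, μs i
        = ∑ i ∈ Finset.Ico (0:ℤ) r, (μ i + ∑ᶠ j : ℤ, d j i) :=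
          Finset.sum_congr rfl (fun i _ => hμs i)
      _ = (∑ i ∈ Finset.Ico (0:ℤ) r, μ i)
          + ∑ i ∈ Finset.Ico (0:ℤ) r, ∑ᶠ j : ℤ, d j i := Finset.sum_add_distrib
      _ = a * p - b * r := by
          rw [sumμ, conserve r hr0 d hd_anti m hd_local hd_shift]; ring
  -- Step C: sum of νs over a period
  have sumνs : ∑ j ∈ Finset.Ico (0:ℤ) r, νs j = t * (a * p - b * r) := by
    have hν : ∀ j : ℤ, νs j = ∑ k ∈ Finset.Ico (0:ℤ) t, μs (j + k) := by
      intro j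
      rw [hνs]
      have hmap : Finset.Ico j (j + t)
          = Finset.map (addLeftEmbedding j) (Finset.Ico (0:ℤ) t) := by
        rw [Finset.map_add_left_Ico, add_zero]
      rw [hmap, Finset.sum_map]
      rfl
    calc ∑ j ∈ Finset.Ico (0:ℤ) r, νs j
        = ∑ j ∈ Finset.Ico (0:ℤ) r, ∑ k ∈ Finset.Ico (0:ℤ) t, μs (j + k) :=
          Finset.sum_congr rfl (fun j _ => hν j)
      _ = ∑ k ∈ Finset.Ico (0:ℤ) t, ∑ j ∈ Finset.Ico (0:ℤ) r, μs (j + k) :=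
          Finset.sum_comm
      _ = ∑ k ∈ Finset.Ico (0:ℤ) t, ∑ i ∈ Finset.Ico k (k + r), μs i := by
          apply Finset.sum_congr rfl
          intro k _
          have hmap : Finset.Ico k (k + r)
              = Finset.map (addLeftEmbedding k) (Finset.Ico (0:ℤ) r) := by
            rw [Finset.map_add_left_Ico, add_zero]
          rw [hmap, Finset.sum_map]
          apply Finset.sum_congr rfl
          intro j _
          simp only [addLeftEmbedding_apply]
          rw [add_comm]
      _ = ∑ _k ∈ Finset.Ico (0:ℤ) t, ∑ i ∈ Finset.Ico (0:ℤ) r, μs i :=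
          Finset.sum_congr rfl (fun k _ => window_const_s8 μs r hr0 hμsper k)
      _ = t * (a * p - b * r) := by
          rw [Finset.sum_const, sumμs, Int.card_Ico, nsmul_eq_mul, sub_zero,
            Int.toNat_of_nonneg (by omega : (0:ℤ) ≤ t)]
  -- Step D: second discharging conserves total charge
  have sumν' : ∑ j ∈ Finset.Ico (0:ℤ) r, ν' j = t * (a * p - b * r) := by
    calc ∑ j ∈ Finset.Ico (0:ℤ) r, ν' j
        = ∑ j ∈ Finset.Ico (0:ℤ) r, (νs j + ∑ᶠ k : ℤ, d' k j) :=
          Finset.sum_congr rfl (fun j _ => hν' j)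
      _ = (∑ j ∈ Finset.Ico (0:ℤ) r, νs j)
          + ∑ j ∈ Finset.Ico (0:ℤ) r, ∑ᶠ k : ℤ, d' k j := Finset.sum_add_distrib
      _ = t * (a * p - b * r) := by
          rw [sumνs, conserve r hr0 d' hd'_anti m' hd'_local hd'_shift]; ring
  -- Step E: the key integer inequality
  have hkey : r * c ≤ t * (a * p - b * r) := by
    have h1 : ∑ _j ∈ Finset.Ico (0:ℤ) r, c ≤ ∑ j ∈ Finset.Ico (0:ℤ) r, ν' j :=
      Finset.sum_le_sum (fun j _ => hcharge j)
    rw [sumν', Finset.sum_const, Int.card_Ico, nsmul_eq_mul, sub_zero,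
      Int.toNat_of_nonneg hr0.le] at h1
    exact h1
  have hkey2 : r * (b * t + c) ≤ a * t * p := by nlinarith
  -- conclude via the density bound
  have hdle := density_le_aux_s8 X p hp hper
  have hcast : (((X ∩ Set.Ico 0 p).ncard : ℕ) : ℝ) = (r:ℝ) := by exact_mod_cast hr.symm
  rw [hcast] at hdle
  refine hdle.trans ?_
  have hpR : (0:ℝ) < (p:ℝ) := by exact_mod_cast hp
  have hbtc : (0:ℝ) < (b:ℝ) * (t:ℝ) + (c:ℝ) := by
    have : (0:ℤ) < b * t + c := by nlinarith
    exact_mod_cast this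
  rw [div_le_div_iff₀ hpR hbtc]
  have : ((r * (b * t + c) : ℤ) : ℝ) ≤ ((a * t * p : ℤ) : ℝ) := by exact_mod_cast hkey2
  push_cast at this
  nlinarith [this]
end
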